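/- arXiv:1110.4241 — 2 statements merged into one kernel-verified Lean document; each statement's English description precedes it below -/
import Mathlib

section
/- Assume m ≥ 2, each μ_j is a nonatomic probability measure and (MAC) holds. Let (s_t)_{t≥0} be positive reals with s_t → 0 and Σ_t s_t = ∞, and let α^0 lie in the relative interior of Δ_{m−1}. Then there exist a sequence (s'_t) of positive reals with s'_t ≤ s_t for all t, s'_t → 0 and Σ_t s'_t = ∞, a sequence (α^t)_{t≥0} in the relative interior of Δ_{m−1} starting at α^0, and a sequence (u^t)_{t≥0} of vectors in ℝ^m, such that for every t: u^t is the partition value vector of some maxsum partition for α^t, and α^{t+1}_i = α^t_i − s'_t (u^t_i − ū^t) for every i (where ū^t := (1/m) Σ_{i=1}^m u^t_i), and moreover lim_{t→∞} min_{i ≤ t} g(α^i) = inf_{α ∈ Δ_{m−1}} g(α) = v, where v := sup over all m-partitions of min_j μ_j(A_j). -/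
set_option linter.unusedSectionVars false
set_option maxHeartbeats 1000000

open MeasureTheory Filter Topology

section sier
variable {X : Type} [MeasurableSpace X] (lam : Measure X) [IsFiniteMeasure lam]

/-- helper: linear growth beats a finite bound -/
lemma nat_mul_le_contra {ε M : ENNReal} (hε : 0 < ε) (hM : M ≠ ⊤)
    (h : ∀ n : ℕ, (n : ENNReal) * ε ≤ M) : False := by
  have hε' : ε ≠ 0 := hε.ne'
  have hdiv : M / ε ≠ ⊤ := by
    rcases eq_or_ne ε ⊤ with rfl | hεt
    · simp [ENNReal.div_top]
    · exact (ENNReal.div_lt_top hM hε').ne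
  obtain ⟨n, hn⟩ := ENNReal.exists_nat_gt hdiv
  have := h n
  have : (n : ENNReal) ≤ M / ε := ENNReal.le_div_iff_mul_le (Or.inl hε') (Or.inr hM) |>.2 this
  exact absurd this (not_le.2 hn)

variable (hsplit : ∀ A : Set X, MeasurableSet A → 0 < lam A →
    ∃ B, MeasurableSet B ∧ B ⊆ A ∧ 0 < lam B ∧ 0 < lam (A \ B))

include hsplit in
lemma exists_small_subset (A : Set X) (hA : MeasurableSet A) (hpos : 0 < lam A)
    {ε : ENNReal} (hε : 0 < ε) :
    ∃ D, MeasurableSet D ∧ D ⊆ A ∧ 0 < lam D ∧ lam D ≤ ε := by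
  by_contra hcon
  push_neg at hcon
  -- every positive measurable subset of A has measure > ε
  have hbig : ∀ D, MeasurableSet D → D ⊆ A → 0 < lam D → ε < lam D := fun D h1 h2 h3 =>
    hcon D h1 h2 h3
  classical
  let step : Set X → Set X := fun B =>
    if h : MeasurableSet B ∧ 0 < lam B then (hsplit B h.1 h.2).choose else ∅
  let R : ℕ → Set X := fun n => Nat.rec A (fun _ B => B \ step B) n
  have hR0 : R 0 = A := rfl
  have hRsucc : ∀ n, R (n + 1) = R n \ step (R n) := fun n => rfl
  have hinv : ∀ n, MeasurableSet (R n) ∧ R n ⊆ A ∧ 0 < lam (R n) := by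
    intro n
    induction n with
    | zero => exact ⟨hA, subset_rfl, hpos⟩
    | succ n ih =>
      obtain ⟨h1, h2, h3⟩ := ih
      have hstep : step (R n) = (hsplit (R n) h1 h3).choose := by
        simp only [step]; exact dif_pos ⟨h1, h3⟩
      obtain ⟨hm1, hm2, hm3, hm4⟩ := (hsplit (R n) h1 h3).choose_spec
      rw [hRsucc]
      refine ⟨h1.diff (hstep ▸ hm1), (Set.diff_subset).trans h2, ?_⟩
      rw [hstep]; exact hm4
  -- the pieces
  let P : ℕ → Set X := fun n => step (R n)
  have hPspec : ∀ n, MeasurableSet (P n) ∧ P n ⊆ R n ∧ 0 < lam (P n) := by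
    intro n
    obtain ⟨h1, h2, h3⟩ := hinv n
    have hstep : P n = (hsplit (R n) h1 h3).choose := by
      simp only [P, step]; exact dif_pos ⟨h1, h3⟩
    obtain ⟨hm1, hm2, hm3, _⟩ := (hsplit (R n) h1 h3).choose_spec
    rw [hstep]
    exact ⟨hm1, hm2, hm3⟩
  have hRmono : ∀ n k, n ≤ k → R k ⊆ R n := by
    intro n k hnk
    induction k with
    | zero => cases Nat.le_zero.1 hnk; exact subset_rfl
    | succ k ih =>
      rcases Nat.lt_or_ge n (k+1) with h | h
      · exact (hRsucc k ▸ Set.diff_subset).trans (ih (Nat.lt_succ_iff.1 h))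
      · cases le_antisymm hnk h; exact subset_rfl
  have hPdisj : Pairwise (Function.onFun Disjoint P) := by
    intro a b hab
    wlog h : a < b generalizing a b
    · exact (this hab.symm (by omega)).symm
    have h1 : P b ⊆ R (a+1) := (hPspec b).2.1.trans (hRmono (a+1) b h)
    have h2 : R (a + 1) = R a \ P a := hRsucc a
    refine Set.disjoint_left.2 fun x hxa hxb => ?_
    have := h1 hxb
    rw [h2] at this
    exact this.2 hxa
  have hsum : ∀ n : ℕ, (n : ENNReal) * ε ≤ lam A := by
    intro n
    have hd : ∑ i ∈ Finset.range n, lam (P i) = lam (⋃ i ∈ Finset.range n, P i) :=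
      (measure_biUnion_finset (hPdisj.pairwiseDisjoint _) (fun i _ => (hPspec i).1)).symm
    have hle : lam (⋃ i ∈ Finset.range n, P i) ≤ lam A := by
      apply measure_mono
      refine Set.iUnion₂_subset fun i _ => (hPspec i).2.1.trans (hinv i).2.1
    calc (n : ENNReal) * ε = ∑ _i ∈ Finset.range n, ε := by simp [Finset.sum_const, mul_comm]
      _ ≤ ∑ i ∈ Finset.range n, lam (P i) := by
          refine Finset.sum_le_sum fun i _ => ?_
          exact (hbig (P i) (hPspec i).1 ((hPspec i).2.1.trans (hinv i).2.1) (hPspec i).2.2).le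
      _ ≤ lam A := hd ▸ hle
  exact nat_mul_le_contra hε (measure_ne_top lam A) hsum

end sier

section sier2
variable {X : Type} [MeasurableSpace X] (lam : Measure X) [IsFiniteMeasure lam]
variable (hsplit : ∀ A : Set X, MeasurableSet A → 0 < lam A →
    ∃ B, MeasurableSet B ∧ B ⊆ A ∧ 0 < lam B ∧ 0 < lam (A \ B))

include hsplit in
lemma exists_subset_measure_eq (A : Set X) (hA : MeasurableSet A) (c : ENNReal)
    (hc : c ≤ lam A) :
    ∃ B, MeasurableSet B ∧ B ⊆ A ∧ lam B = c := by
  classical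
  have hcfin : c ≠ ⊤ := (lt_of_le_of_lt hc (measure_lt_top lam A)).ne
  -- the sup of possible increments
  let T : Set X → ENNReal := fun B =>
    sSup {v | ∃ D, MeasurableSet D ∧ D ⊆ A \ B ∧ lam D ≤ c - lam B ∧ v = lam D}
  have hTle : ∀ B, T B ≤ c := by
    intro B
    refine sSup_le fun v hv => ?_
    obtain ⟨D, _, _, hD, rfl⟩ := hv
    exact hD.trans tsub_le_self
  have helper : ∀ B : Set X, ∃ D, MeasurableSet D ∧ D ⊆ A \ B ∧ lam D ≤ c - lam B ∧
      T B / 2 ≤ lam D := by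
    intro B
    rcases eq_or_ne (T B) 0 with h0 | h0
    · refine ⟨∅, MeasurableSet.empty, Set.empty_subset _, ?_, ?_⟩
      · simp
      · rw [h0]; simp
    · have hfin : T B ≠ ⊤ := ((hTle B).trans_lt hcfin.lt_top).ne
      have : T B / 2 < T B := ENNReal.half_lt_self h0 hfin
      obtain ⟨v, hv, hvlt⟩ := lt_sSup_iff.1 this
      obtain ⟨D, hD1, hD2, hD3, rfl⟩ := hv
      exact ⟨D, hD1, hD2, hD3, hvlt.le⟩
  let step : Set X → Set X := fun B => (helper B).choose
  have hstep : ∀ B, MeasurableSet (step B) ∧ step B ⊆ A \ B ∧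
      lam (step B) ≤ c - lam B ∧ T B / 2 ≤ lam (step B) := fun B => (helper B).choose_spec
  let Bs : ℕ → Set X := fun n => Nat.rec ∅ (fun _ B => B ∪ step B) n
  have hBsucc : ∀ n, Bs (n + 1) = Bs n ∪ step (Bs n) := fun _ => rfl
  have hinv : ∀ n, MeasurableSet (Bs n) ∧ Bs n ⊆ A ∧ lam (Bs n) ≤ c := by
    intro n
    induction n with
    | zero =>
      refine ⟨MeasurableSet.empty, Set.empty_subset _, ?_⟩
      rw [show Bs 0 = ∅ from rfl, measure_empty]
      exact zero_le
    | succ n ih =>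
      obtain ⟨h1, h2, h3⟩ := ih
      obtain ⟨hs1, hs2, hs3, _⟩ := hstep (Bs n)
      have hsub : step (Bs n) ⊆ A := hs2.trans Set.diff_subset
      refine ⟨h1.union hs1, Set.union_subset h2 hsub, ?_⟩
      rw [hBsucc]
      calc lam (Bs n ∪ step (Bs n)) ≤ lam (Bs n) + lam (step (Bs n)) := measure_union_le _ _
        _ ≤ lam (Bs n) + (c - lam (Bs n)) := by gcongr
        _ = c := add_tsub_cancel_of_le h3
  have hadd : ∀ n, lam (Bs (n+1)) = lam (Bs n) + lam (step (Bs n)) := by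
    intro n
    rw [hBsucc]
    refine measure_union ?_ (hstep (Bs n)).1
    exact Set.disjoint_right.2 fun x hx => ((hstep (Bs n)).2.1 hx).2
  have hBmono : Monotone Bs := by
    refine monotone_nat_of_le_succ fun n => ?_
    rw [hBsucc]; exact Set.subset_union_left
  set Binf := ⋃ n, Bs n with hBinf
  have hBinfm : MeasurableSet Binf := MeasurableSet.iUnion fun n => (hinv n).1
  have hBinfA : Binf ⊆ A := Set.iUnion_subset fun n => (hinv n).2.1
  have hBinfle : lam Binf ≤ c := by
    rw [hBinf, hBmono.directed_le.measure_iUnion]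
    exact iSup_le fun n => (hinv n).2.2
  refine ⟨Binf, hBinfm, hBinfA, ?_⟩
  by_contra hne
  have hlt : lam Binf < c := lt_of_le_of_ne hBinfle hne
  have hdiffpos : 0 < lam (A \ Binf) := by
    have h1 : lam (A \ Binf) = lam A - lam Binf :=
      measure_diff hBinfA hBinfm.nullMeasurableSet (measure_ne_top lam Binf)
    rw [h1]
    exact tsub_pos_of_lt (hlt.trans_le hc)
  obtain ⟨D, hD1, hD2, hD3, hD4⟩ := exists_small_subset lam hsplit (A \ Binf)
    (hA.diff hBinfm) hdiffpos (tsub_pos_of_lt hlt)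
  -- D certifies T (Bs n) ≥ lam D for all n
  have hTbound : ∀ n, lam D ≤ T (Bs n) := by
    intro n
    refine le_sSup ?_
    refine ⟨D, hD1, hD2.trans (Set.diff_subset_diff_right (Set.subset_iUnion Bs n)), ?_, rfl⟩
    calc lam D ≤ c - lam Binf := hD4
      _ ≤ c - lam (Bs n) := tsub_le_tsub_left (measure_mono (Set.subset_iUnion Bs n)) c
  have hgrow : ∀ n : ℕ, (n : ENNReal) * (lam D / 2) ≤ lam (Bs n) := by
    intro n
    induction n with
    | zero => simp
    | succ n ih =>
      rw [hadd n, Nat.cast_succ, add_mul, one_mul]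
      gcongr
      exact le_trans (by gcongr; exact hTbound n) (hstep (Bs n)).2.2.2
  refine nat_mul_le_contra (ENNReal.half_pos hD3.ne') hcfin ?_
  exact fun n => (hgrow n).trans (hinv n).2.2

include hsplit in
lemma exists_partition_measure_eq :
    ∀ (k : ℕ) (G : Set X), MeasurableSet G → ∀ c : Fin (k+1) → ENNReal,
    (∑ i, c i) = lam G →
    ∃ D : Fin (k+1) → Set X, (∀ i, MeasurableSet (D i)) ∧
      (Pairwise (Function.onFun Disjoint D)) ∧ (⋃ i, D i) = G ∧ ∀ i, lam (D i) = c i := by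
  intro k
  induction k with
  | zero =>
    intro G hG c hc
    refine ⟨fun _ => G, fun _ => hG, ?_, ?_, ?_⟩
    · intro a b hab
      exact absurd (by omega : a = b) hab
    · exact Set.iUnion_const G
    · intro i
      have hi : i = 0 := by omega
      rw [hi, ← hc]
      simp
  | succ k ih =>
    intro G hG c hc
    have hc0 : c 0 ≤ lam G := by
      rw [← hc]
      exact Finset.single_le_sum (fun i _ => zero_le) (Finset.mem_univ 0)
    obtain ⟨B, hB1, hB2, hB3⟩ := exists_subset_measure_eq lam hsplit G hG (c 0) hc0
    have hG' : MeasurableSet (G \ B) := hG.diff hB1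
    have hc0top : c 0 ≠ ⊤ := (lt_of_le_of_lt hc0 (measure_lt_top lam G)).ne
    have hsum' : (∑ i : Fin (k+1), c i.succ) = lam (G \ B) := by
      have h1 : lam (G \ B) = lam G - lam B :=
        measure_diff hB2 hB1.nullMeasurableSet (measure_ne_top lam B)
      have h2 : c 0 + ∑ i : Fin (k+1), c i.succ = lam G := by
        rw [← Fin.sum_univ_succ]; exact hc
      rw [h1, ← h2, hB3, ENNReal.add_sub_cancel_left hc0top]
    obtain ⟨D', hD1, hD2, hD3, hD4⟩ := ih (G \ B) hG' (fun i => c i.succ) hsum'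
    have hBD : ∀ j, Disjoint B (D' j) := by
      intro j
      refine Set.disjoint_left.2 fun x hx hx' => ?_
      have hmem : x ∈ G \ B := hD3 ▸ Set.mem_iUnion.2 ⟨j, hx'⟩
      exact hmem.2 hx
    refine ⟨Fin.cons B D', ?_, ?_, ?_, ?_⟩
    · intro i
      rcases Fin.eq_zero_or_eq_succ i with rfl | ⟨i', rfl⟩
      · exact hB1
      · exact hD1 i'
    · intro a b hab
      rcases Fin.eq_zero_or_eq_succ a with rfl | ⟨a', rfl⟩ <;>
        rcases Fin.eq_zero_or_eq_succ b with rfl | ⟨b', rfl⟩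
      · exact absurd rfl hab
      · simpa only [Function.onFun, Fin.cons_zero, Fin.cons_succ] using hBD b'
      · simpa only [Function.onFun, Fin.cons_zero, Fin.cons_succ] using (hBD a').symm
      · have : a' ≠ b' := fun h => hab (by rw [h])
        simpa only [Function.onFun, Fin.cons_succ] using hD2 this
    · ext x
      constructor
      · intro hx
        obtain ⟨i, hi⟩ := Set.mem_iUnion.1 hx
        rcases Fin.eq_zero_or_eq_succ i with rfl | ⟨i', rfl⟩
        · rw [Fin.cons_zero] at hi; exact hB2 hi
        · rw [Fin.cons_succ] at hi
          exact (hD3 ▸ Set.mem_iUnion.2 ⟨i', hi⟩ : x ∈ G \ B).1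
      · intro hx
        by_cases hxB : x ∈ B
        · exact Set.mem_iUnion.2 ⟨0, by rw [Fin.cons_zero]; exact hxB⟩
        · have hx' : x ∈ ⋃ i, D' i := by rw [hD3]; exact ⟨hx, hxB⟩
          obtain ⟨i, hi⟩ := Set.mem_iUnion.1 hx'
          exact Set.mem_iUnion.2 ⟨i.succ, by rw [Fin.cons_succ]; exact hi⟩
    · intro i
      rcases Fin.eq_zero_or_eq_succ i with rfl | ⟨i', rfl⟩
      · simpa using hB3
      · simpa using hD4 i'
end sier2

section basics
variable {C : Type} [MeasurableSpace C] {m : ℕ} [Nonempty (Fin m)]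
  {ν : Measure C} [IsFiniteMeasure ν] {f : Fin m → C → ℝ}
  (hf_meas : ∀ j, Measurable (f j))
  (hf_nonneg : ∀ j x, 0 ≤ f j x)
  (hf_int : ∀ j, Integrable (f j) ν)

lemma sup_eq_sup' (α : Fin m → ℝ) (x : C) :
    (⨆ j, α j * f j x) = Finset.univ.sup' Finset.univ_nonempty (fun j => α j * f j x) :=
  (Finset.sup'_univ_eq_ciSup _).symm

lemma le_supf (α : Fin m → ℝ) (k : Fin m) (x : C) :
    α k * f k x ≤ ⨆ j, α j * f j x := by
  rw [sup_eq_sup']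
  exact Finset.le_sup' (fun j => α j * f j x) (Finset.mem_univ k)

include hf_meas in
lemma supf_meas (α : Fin m → ℝ) : Measurable (fun x => ⨆ j, α j * f j x) := by
  have : (fun x => ⨆ j, α j * f j x) =
      Finset.univ.sup' Finset.univ_nonempty (fun j x => α j * f j x) := by
    funext x
    rw [sup_eq_sup', Finset.sup'_apply]
  rw [this]
  exact Finset.measurable_sup' _ fun j _ => (hf_meas j).const_mul _

include hf_nonneg in
lemma supf_nonneg (α : Fin m → ℝ) (hα : ∀ j, 0 ≤ α j) (x : C) :
    0 ≤ ⨆ j, α j * f j x := by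
  obtain ⟨k⟩ := (inferInstance : Nonempty (Fin m))
  exact le_trans (mul_nonneg (hα k) (hf_nonneg k x)) (le_supf α k x)

include hf_nonneg in
lemma supf_le_sum (α : Fin m → ℝ) (hα : ∀ j, 0 ≤ α j) (x : C) :
    (⨆ j, α j * f j x) ≤ ∑ j, α j * f j x := by
  rw [sup_eq_sup']
  refine Finset.sup'_le _ _ fun k _ => ?_
  exact Finset.single_le_sum (fun j _ => mul_nonneg (hα j) (hf_nonneg j x)) (Finset.mem_univ k)

include hf_meas hf_nonneg hf_int in
lemma supf_int (α : Fin m → ℝ) (hα : ∀ j, 0 ≤ α j) :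
    Integrable (fun x => ⨆ j, α j * f j x) ν := by
  refine Integrable.mono' (g := fun x => ∑ j, α j * f j x) ?_
    ((supf_meas hf_meas α).aestronglyMeasurable) ?_
  · exact integrable_finset_sum _ fun j _ => ((hf_int j).const_mul _)
  · refine Filter.Eventually.of_forall fun x => ?_
    rw [Real.norm_eq_abs, abs_of_nonneg (supf_nonneg hf_nonneg α hα x)]
    exact supf_le_sum hf_nonneg α hα x

/-- the sets where index `k` attains the max -/
def Pset (f : Fin m → C → ℝ) (α : Fin m → ℝ) (k : Fin m) : Set C :=
  {x | ∀ h, α h * f h x ≤ α k * f k x}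

/-- canonical maxsum partition: first maximizing index -/
def part (f : Fin m → C → ℝ) (α : Fin m → ℝ) (k : Fin m) : Set C :=
  Pset f α k \ ⋃ (h : Fin m) (_ : h < k), Pset f α h

include hf_meas in
lemma Pset_meas (α : Fin m → ℝ) (k : Fin m) : MeasurableSet (Pset f α k) := by
  have : Pset f α k = ⋂ h, {x | α h * f h x ≤ α k * f k x} := by
    ext x; simp [Pset]
  rw [this]
  exact MeasurableSet.iInter fun h =>
    measurableSet_le ((hf_meas h).const_mul _) ((hf_meas k).const_mul _)

include hf_meas in
lemma part_meas (α : Fin m → ℝ) (k : Fin m) : MeasurableSet (part f α k) :=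
  (Pset_meas hf_meas α k).diff
    (MeasurableSet.iUnion fun h => MeasurableSet.iUnion fun _ => Pset_meas hf_meas α h)

lemma part_subset_Pset (α : Fin m → ℝ) (k : Fin m) : part f α k ⊆ Pset f α k :=
  Set.diff_subset

lemma part_spec (α : Fin m → ℝ) (k : Fin m) {x : C} (hx : x ∈ part f α k) :
    ∀ h, α h * f h x ≤ α k * f k x := hx.1

lemma part_disjoint (α : Fin m → ℝ) : Pairwise (Function.onFun Disjoint (part f α)) := by
  intro a b hab
  wlog h : a < b generalizing a b
  · exact (this hab.symm (by omega)).symm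
  refine Set.disjoint_left.2 fun x hxa hxb => ?_
  exact hxb.2 (Set.mem_iUnion.2 ⟨a, Set.mem_iUnion.2 ⟨h, hxa.1⟩⟩)

lemma part_cover (α : Fin m → ℝ) : (⋃ k, part f α k) = Set.univ := by
  refine Set.eq_univ_of_forall fun x => ?_
  classical
  have hne : (Finset.univ.filter (fun k => x ∈ Pset f α k)).Nonempty := by
    have : ∃ k : Fin m, ∀ h, α h * f h x ≤ α k * f k x := by
      obtain ⟨k, hk⟩ := Finite.exists_max (fun j => α j * f j x)
      exact ⟨k, hk⟩
    obtain ⟨k, hk⟩ := this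
    exact ⟨k, Finset.mem_filter.2 ⟨Finset.mem_univ _, hk⟩⟩
  set k0 := (Finset.univ.filter (fun k => x ∈ Pset f α k)).min' hne with hk0
  have hk0mem := (Finset.univ.filter (fun k => x ∈ Pset f α k)).min'_mem hne
  rw [Finset.mem_filter] at hk0mem
  refine Set.mem_iUnion.2 ⟨k0, hk0mem.2, ?_⟩
  intro hx
  obtain ⟨h, hh⟩ := Set.mem_iUnion.1 hx
  obtain ⟨hlt, hmem⟩ := Set.mem_iUnion.1 hh
  have : k0 ≤ h := (Finset.univ.filter (fun k => x ∈ Pset f α k)).min'_le h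
    (Finset.mem_filter.2 ⟨Finset.mem_univ _, hmem⟩)
  omega

lemma part_sup_eq (α : Fin m → ℝ) (k : Fin m) {x : C} (hx : x ∈ part f α k) :
    (⨆ j, α j * f j x) = α k * f k x := by
  refine le_antisymm ?_ (le_supf α k x)
  rw [sup_eq_sup']
  exact Finset.sup'_le _ _ fun h _ => part_spec α k hx h

/-- partition values -/
noncomputable def uval (ν : Measure C) (f : Fin m → C → ℝ) (α : Fin m → ℝ) (j : Fin m) : ℝ :=
  ∫ x in part f α j, f j x ∂ν

include hf_meas hf_nonneg in
lemma uval_nonneg (α : Fin m → ℝ) (j : Fin m) : 0 ≤ uval ν f α j :=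
  setIntegral_nonneg (part_meas hf_meas α j) fun x _ => hf_nonneg j x

include hf_meas hf_nonneg hf_int in
lemma uval_le_int (α : Fin m → ℝ) (j : Fin m) : uval ν f α j ≤ ∫ x, f j x ∂ν := by
  have := setIntegral_mono_set (s := part f α j) (t := Set.univ)
    (hf_int j).integrableOn
    (Filter.Eventually.of_forall fun x => hf_nonneg j x)
    (Filter.Eventually.of_forall fun x _ => trivial)
  simpa [uval] using this

include hf_meas hf_int in
lemma integral_eq_sum_parts (α : Fin m → ℝ) (F : C → ℝ) (hF : Integrable F ν) :
    ∫ x, F x ∂ν = ∑ k, ∫ x in part f α k, F x ∂ν := by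
  have h1 : ∫ x, F x ∂ν = ∫ x in ⋃ k, part f α k, F x ∂ν := by
    rw [part_cover, Measure.restrict_univ]
  rw [h1, integral_iUnion (fun k => part_meas hf_meas α k) (part_disjoint α)
    hF.integrableOn, tsum_fintype]

include hf_meas hf_nonneg hf_int in
lemma g_eq_sum (α : Fin m → ℝ) (hα : ∀ j, 0 ≤ α j) :
    ∫ x, (⨆ j, α j * f j x) ∂ν = ∑ k, α k * uval ν f α k := by
  rw [integral_eq_sum_parts hf_meas hf_int α _ (supf_int hf_meas hf_nonneg hf_int α hα)]
  refine Finset.sum_congr rfl fun k _ => ?_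
  rw [show ∫ x in part f α k, (⨆ j, α j * f j x) ∂ν = ∫ x in part f α k, α k * f k x ∂ν from
    setIntegral_congr_fun (part_meas hf_meas α k) fun x hx => part_sup_eq α k hx]
  rw [integral_const_mul]
  rfl

include hf_meas hf_nonneg hf_int in
lemma sum_mul_uval_le (α β : Fin m → ℝ) (hβ : ∀ j, 0 ≤ β j) :
    ∑ k, β k * uval ν f α k ≤ ∫ x, (⨆ j, β j * f j x) ∂ν := by
  rw [integral_eq_sum_parts hf_meas hf_int α _ (supf_int hf_meas hf_nonneg hf_int β hβ)]
  refine Finset.sum_le_sum fun k _ => ?_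
  have h1 : β k * uval ν f α k = ∫ x in part f α k, β k * f k x ∂ν := by
    rw [integral_const_mul]; rfl
  rw [h1]
  refine setIntegral_mono_on (((hf_int k).const_mul _).integrableOn)
    ((supf_int hf_meas hf_nonneg hf_int β hβ).integrableOn)
    (part_meas hf_meas α k) fun x _ => le_supf β k x

include hf_meas hf_nonneg hf_int in
lemma coord_le_g (α : Fin m → ℝ) (hα : ∀ j, 0 ≤ α j) (k : Fin m) :
    α k * ∫ x, f k x ∂ν ≤ ∫ x, (⨆ j, α j * f j x) ∂ν := by
  rw [← integral_const_mul]
  refine integral_mono ((hf_int k).const_mul _)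
    (supf_int hf_meas hf_nonneg hf_int α hα) fun x => le_supf α k x

end basics

section division
variable {C : Type} [MeasurableSpace C] {m : ℕ} [Nonempty (Fin m)]
  {ν : Measure C} [IsFiniteMeasure ν] {f : Fin m → C → ℝ}
  (hf_meas : ∀ j, Measurable (f j))
  (hf_nonneg : ∀ j x, 0 ≤ f j x)
  (hf_int : ∀ j, Integrable (f j) ν)

/-- total density -/
local notation "F" => fun x => ∑ j, f j x

include hf_meas in
lemma F_meas : Measurable (fun x => ∑ j, f j x) := by
  exact Finset.measurable_sum _ fun j _ => hf_meas j

include hf_nonneg in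
lemma F_nonneg : ∀ x, (0:ℝ) ≤ ∑ j, f j x := fun x =>
  Finset.sum_nonneg fun j _ => hf_nonneg j x

include hf_int in
lemma F_int : Integrable (fun x => ∑ j, f j x) ν :=
  integrable_finset_sum _ fun j _ => hf_int j

include hf_nonneg in
lemma f_le_F : ∀ j x, f j x ≤ ∑ j, f j x := by
  intro j x
  exact Finset.single_le_sum (fun k _ => hf_nonneg k x) (Finset.mem_univ j)

variable (hsplitI : ∀ A : Set C, MeasurableSet A → 0 < ∫ x in A, (∑ j, f j x) ∂ν →
    ∃ B, MeasurableSet B ∧ B ⊆ A ∧ 0 < ∫ x in B, (∑ j, f j x) ∂ν ∧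
      0 < ∫ x in A \ B, (∑ j, f j x) ∂ν)

include hf_meas hf_nonneg hf_int in
/-- exact proportional splitting w.r.t. all of the `f j` integrals simultaneously via `lam` -/
lemma exists_exact_lam_partition (hsplitI : ∀ A : Set C, MeasurableSet A →
      0 < ∫ x in A, (∑ j, f j x) ∂ν →
      ∃ B, MeasurableSet B ∧ B ⊆ A ∧ 0 < ∫ x in B, (∑ j, f j x) ∂ν ∧
        0 < ∫ x in A \ B, (∑ j, f j x) ∂ν)
    (G : Set C) (hG : MeasurableSet G) (θ : Fin m → ℝ)
    (hθ0 : ∀ j, 0 ≤ θ j) (hθ1 : ∑ j, θ j = 1) :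
    ∃ D : Fin m → Set C, (∀ j, MeasurableSet (D j)) ∧
      Pairwise (Function.onFun Disjoint D) ∧ (⋃ j, D j) = G ∧
      ∀ j, ∫ x in D j, (∑ i, f i x) ∂ν = θ j * ∫ x in G, (∑ i, f i x) ∂ν := by
  classical
  set lam : Measure C := ν.withDensity (fun x => ENNReal.ofReal (∑ j, f j x)) with hlam
  have hlam_apply : ∀ A : Set C, MeasurableSet A →
      lam A = ENNReal.ofReal (∫ x in A, (∑ j, f j x) ∂ν) := by
    intro A hA
    rw [hlam, withDensity_apply _ hA]
    rw [ofReal_integral_eq_lintegral_ofReal ((F_int hf_int).integrableOn)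
      (Filter.Eventually.of_forall fun x => F_nonneg hf_nonneg x)]
  have hlamfin : IsFiniteMeasure lam := by
    constructor
    rw [hlam_apply Set.univ MeasurableSet.univ]
    exact ENNReal.ofReal_lt_top
  have hsplit : ∀ A : Set C, MeasurableSet A → 0 < lam A →
      ∃ B, MeasurableSet B ∧ B ⊆ A ∧ 0 < lam B ∧ 0 < lam (A \ B) := by
    intro A hA hpos
    rw [hlam_apply A hA] at hpos
    have : 0 < ∫ x in A, (∑ j, f j x) ∂ν := by
      by_contra hc
      push_neg at hc
      rw [ENNReal.ofReal_eq_zero.2 hc] at hpos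
      exact lt_irrefl _ hpos
    obtain ⟨B, hB1, hB2, hB3, hB4⟩ := hsplitI A hA this
    refine ⟨B, hB1, hB2, ?_, ?_⟩
    · rw [hlam_apply B hB1]; exact ENNReal.ofReal_pos.2 hB3
    · rw [hlam_apply (A \ B) (hA.diff hB1)]; exact ENNReal.ofReal_pos.2 hB4
  obtain ⟨k, hk⟩ : ∃ k, m = k + 1 := by
    obtain ⟨j⟩ := (inferInstance : Nonempty (Fin m))
    exact ⟨m - 1, by have := j.pos; omega⟩
  subst hk
  have hGint : (0:ℝ) ≤ ∫ x in G, (∑ j, f j x) ∂ν :=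
    setIntegral_nonneg hG fun x _ => F_nonneg hf_nonneg x
  set c : Fin (k+1) → ENNReal := fun i => ENNReal.ofReal (θ i * ∫ x in G, (∑ j, f j x) ∂ν)
    with hcdef
  have hcsum : (∑ i, c i) = lam G := by
    rw [hlam_apply G hG, hcdef]
    rw [← ENNReal.ofReal_sum_of_nonneg (fun i _ => mul_nonneg (hθ0 i) hGint)]
    rw [← Finset.sum_mul, hθ1, one_mul]
  obtain ⟨D, hD1, hD2, hD3, hD4⟩ := exists_partition_measure_eq lam (hsplit) k G hG c hcsum
  refine ⟨D, hD1, hD2, hD3, fun j => ?_⟩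
  have h1 : lam (D j) = ENNReal.ofReal (∫ x in D j, (∑ i, f i x) ∂ν) :=
    hlam_apply (D j) (hD1 j)
  have h2 := hD4 j
  rw [h1, hcdef] at h2
  have h3 : (0:ℝ) ≤ ∫ x in D j, (∑ i, f i x) ∂ν :=
    setIntegral_nonneg (hD1 j) fun x _ => F_nonneg hf_nonneg x
  have := congrArg ENNReal.toReal h2
  rwa [ENNReal.toReal_ofReal h3, ENNReal.toReal_ofReal (mul_nonneg (hθ0 j) hGint)] at this

end division

section division2
variable {C : Type} [MeasurableSpace C] {m : ℕ} [Nonempty (Fin m)]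
  {ν : Measure C} [IsFiniteMeasure ν] {f : Fin m → C → ℝ}
  (hf_meas : ∀ j, Measurable (f j))
  (hf_nonneg : ∀ j x, 0 ≤ f j x)
  (hf_int : ∀ j, Integrable (f j) ν)
  (hsplitI : ∀ A : Set C, MeasurableSet A → 0 < ∫ x in A, (∑ j, f j x) ∂ν →
    ∃ B, MeasurableSet B ∧ B ⊆ A ∧ 0 < ∫ x in B, (∑ j, f j x) ∂ν ∧
      0 < ∫ x in A \ B, (∑ j, f j x) ∂ν)

include hf_meas hf_nonneg hf_int hsplitI in
set_option maxHeartbeats 2000000 in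
lemma prop_div (E : Set C) (hE : MeasurableSet E) (θ : Fin m → ℝ)
    (hθ0 : ∀ j, 0 ≤ θ j) (hθ1 : ∑ j, θ j = 1) {ε : ℝ} (hε : 0 < ε) :
    ∃ D : Fin m → Set C, (∀ j, MeasurableSet (D j)) ∧
      Pairwise (Function.onFun Disjoint D) ∧ (⋃ j, D j) = E ∧
      ∀ j, θ j * ∫ x in E, f j x ∂ν - ε ≤ ∫ x in D j, f j x ∂ν := by
  classical
  set Mtot : ℝ := ∫ x, (∑ i, f i x) ∂ν with hMtot
  have hMtot0 : 0 ≤ Mtot := integral_nonneg (F_nonneg hf_nonneg)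
  obtain ⟨N, hN0, hMN⟩ : ∃ N : ℕ, 0 < N ∧ Mtot ≤ ε * N := by
    refine ⟨⌈Mtot / ε⌉₊ + 1, Nat.succ_pos _, ?_⟩
    have h1 : Mtot / ε ≤ (⌈Mtot / ε⌉₊ : ℝ) := Nat.le_ceil _
    have h2 : (⌈Mtot / ε⌉₊ : ℝ) ≤ (⌈Mtot / ε⌉₊ + 1 : ℕ) := by push_cast; linarith
    calc Mtot = (Mtot / ε) * ε := by field_simp
      _ ≤ ((⌈Mtot / ε⌉₊ + 1 : ℕ) : ℝ) * ε := by
          exact mul_le_mul_of_nonneg_right (h1.trans h2) hε.le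
      _ = ε * ((⌈Mtot / ε⌉₊ + 1 : ℕ) : ℝ) := mul_comm _ _
  have hNR : (0:ℝ) < N := by exact_mod_cast hN0
  -- level function and cells
  set L : C → Fin m → ℕ := fun x j => ⌊(N * f j x) / (∑ i, f i x)⌋₊ with hL
  set cell : (Fin m → Fin (N+1)) → Set C := fun c =>
    E ∩ {x | (∑ i, f i x) ≠ 0} ∩ ⋂ j, {x | L x j = (c j : ℕ)} with hcell
  set res : Set C := E ∩ {x | (∑ i, f i x) = 0} with hres
  have hFmeas := F_meas hf_meas
  have hcellmeas : ∀ c, MeasurableSet (cell c) := by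
    intro c
    refine (hE.inter ((hFmeas (measurableSet_singleton 0)).compl)).inter ?_
    refine MeasurableSet.iInter fun j => ?_
    have : Measurable fun x => L x j := by
      rw [hL]
      exact Nat.measurable_floor.comp (((hf_meas j).const_mul _).div hFmeas)
    exact this (measurableSet_singleton ((c j : ℕ)))
  have hresmeas : MeasurableSet res := hE.inter (hFmeas (measurableSet_singleton 0))
  have hcelldisj : Pairwise (Function.onFun Disjoint cell) := by
    intro c c' hcc
    obtain ⟨j, hj⟩ := Function.ne_iff.1 hcc
    refine Set.disjoint_left.2 fun x hx hx' => ?_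
    have h1 : L x j = (c j : ℕ) := by
      have := hx.2; rw [Set.mem_iInter] at this; exact this j
    have h2 : L x j = (c' j : ℕ) := by
      have := hx'.2; rw [Set.mem_iInter] at this; exact this j
    exact hj (Fin.ext (h1 ▸ h2))
  -- pointwise bounds on a cell
  have hFpos : ∀ x, x ∈ {x | (∑ i, f i x) ≠ 0} → 0 < ∑ i, f i x := fun x hx =>
    lt_of_le_of_ne (F_nonneg hf_nonneg x) (Ne.symm hx)
  have hcell_lb : ∀ c, ∀ x ∈ cell c, ∀ j, ((c j : ℕ) : ℝ) * (∑ i, f i x) ≤ N * f j x := by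
    intro c x hx j
    have hF : 0 < ∑ i, f i x := hFpos x hx.1.2
    have h1 : L x j = (c j : ℕ) := by
      have := hx.2; rw [Set.mem_iInter] at this; exact this j
    have h2 : ((L x j : ℕ) : ℝ) ≤ (N * f j x) / (∑ i, f i x) := by
      rw [hL]
      exact Nat.floor_le (div_nonneg (mul_nonneg (Nat.cast_nonneg N) (hf_nonneg j x)) hF.le)
    rw [h1] at h2
    calc ((c j : ℕ) : ℝ) * (∑ i, f i x) ≤ ((N * f j x) / (∑ i, f i x)) * (∑ i, f i x) :=
      mul_le_mul_of_nonneg_right h2 hF.le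
      _ = N * f j x := div_mul_cancel₀ _ hF.ne'
  have hcell_ub : ∀ c, ∀ x ∈ cell c, ∀ j, N * f j x ≤ (((c j : ℕ) : ℝ) + 1) * (∑ i, f i x) := by
    intro c x hx j
    have hF : 0 < ∑ i, f i x := hFpos x hx.1.2
    have h1 : L x j = (c j : ℕ) := by
      have := hx.2; rw [Set.mem_iInter] at this; exact this j
    have h2 : (N * f j x) / (∑ i, f i x) < ((L x j : ℕ) : ℝ) + 1 := by
      rw [hL]
      exact Nat.lt_floor_add_one _
    rw [h1] at h2
    have := mul_le_mul_of_nonneg_right h2.le hF.le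
    calc N * f j x = ((N * f j x) / (∑ i, f i x)) * (∑ i, f i x) :=
      (div_mul_cancel₀ _ hF.ne').symm
      _ ≤ (((c j : ℕ) : ℝ) + 1) * (∑ i, f i x) := this
  -- cells cover E off the residual
  have hcells_cover : (⋃ c, cell c) = E ∩ {x | (∑ i, f i x) ≠ 0} := by
    ext x
    constructor
    · intro hx
      obtain ⟨c, hc⟩ := Set.mem_iUnion.1 hx
      exact hc.1
    · intro hx
      have hF : 0 < ∑ i, f i x := hFpos x hx.2
      have hLle : ∀ j, L x j < N + 1 := by
        intro j
        have h1 : (N * f j x) / (∑ i, f i x) ≤ (N : ℝ) := by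
          rw [div_le_iff₀ hF]
          exact mul_le_mul_of_nonneg_left (f_le_F hf_nonneg j x) (Nat.cast_nonneg N)
        have h2 : L x j ≤ ⌊(N : ℝ)⌋₊ := by
          rw [hL]; exact Nat.floor_le_floor h1
        rw [Nat.floor_natCast] at h2
        omega
      refine Set.mem_iUnion.2 ⟨fun j => ⟨L x j, hLle j⟩, ⟨hx, ?_⟩⟩
      rw [Set.mem_iInter]
      intro j
      rfl
  -- exact partitions of each cell
  have hDc : ∀ c, ∃ D : Fin m → Set C, (∀ j, MeasurableSet (D j)) ∧
      Pairwise (Function.onFun Disjoint D) ∧ (⋃ j, D j) = cell c ∧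
      ∀ j, ∫ x in D j, (∑ i, f i x) ∂ν = θ j * ∫ x in cell c, (∑ i, f i x) ∂ν :=
    fun c => exists_exact_lam_partition hf_meas hf_nonneg hf_int hsplitI
      (cell c) (hcellmeas c) θ hθ0 hθ1
  choose Dc hDc1 hDc2 hDc3 hDc4 using hDc
  have hDc_sub : ∀ c j, Dc c j ⊆ cell c := fun c j =>
    (hDc3 c) ▸ Set.subset_iUnion (Dc c) j
  -- assemble
  set j0 : Fin m := Classical.arbitrary (Fin m) with hj0
  set D : Fin m → Set C := fun j => (⋃ c, Dc c j) ∪ (if j = j0 then res else ∅) with hD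
  have hDmeas : ∀ j, MeasurableSet (D j) := by
    intro j
    refine (MeasurableSet.iUnion fun c => hDc1 c j).union ?_
    by_cases h : j = j0 <;> simp [h, hresmeas]
  have hDdisj : Pairwise (Function.onFun Disjoint D) := by
    intro a b hab
    rw [hD]
    simp only [Function.onFun]
    refine Set.disjoint_left.2 fun x hx hx' => ?_
    have hres_notcell : ∀ c j, x ∈ res → x ∉ Dc c j := by
      intro c j hr hd
      exact ((hDc_sub c j hd).1.2) hr.2
    rcases hx with hx | hx
    · obtain ⟨c, hc⟩ := Set.mem_iUnion.1 hx
      rcases hx' with hx' | hx'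
      · obtain ⟨c', hc'⟩ := Set.mem_iUnion.1 hx'
        rcases eq_or_ne c c' with rfl | hcc
        · exact Set.disjoint_left.1 (hDc2 c hab) hc hc'
        · exact Set.disjoint_left.1 (hcelldisj hcc) (hDc_sub c a hc) (hDc_sub c' b hc')
      · split_ifs at hx' with h
        · exact hres_notcell c a hx' hc
        · exact hx'
    · split_ifs at hx with h
      · rcases hx' with hx' | hx'
        · obtain ⟨c', hc'⟩ := Set.mem_iUnion.1 hx'
          exact hres_notcell c' b hx hc'
        · split_ifs at hx' with h'
          · exact hab (h.trans h'.symm)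
          · exact hx'
      · exact hx
  have hDcover : (⋃ j, D j) = E := by
    rw [hD]
    ext x
    simp only [Set.mem_iUnion, Set.mem_union]
    constructor
    · rintro ⟨j, hj | hj⟩
      · obtain ⟨c, hc⟩ := hj
        exact (hDc_sub c j hc).1.1
      · split_ifs at hj with h
        · exact hj.1
        · exact absurd hj (Set.notMem_empty x)
    · intro hx
      by_cases hF : (∑ i, f i x) = 0
      · exact ⟨j0, Or.inr (by rw [if_pos rfl]; exact ⟨hx, hF⟩)⟩
      · have : x ∈ ⋃ c, cell c := by
          rw [hcells_cover]; exact ⟨hx, hF⟩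
        obtain ⟨c, hc⟩ := Set.mem_iUnion.1 this
        have : x ∈ ⋃ j, Dc c j := by rw [hDc3 c]; exact hc
        obtain ⟨j, hj⟩ := Set.mem_iUnion.1 this
        exact ⟨j, Or.inl ⟨c, hj⟩⟩
  refine ⟨D, hDmeas, hDdisj, hDcover, fun j => ?_⟩
  -- the integral bound
  have hθj1 : θ j ≤ 1 := by
    rw [← hθ1]
    exact Finset.single_le_sum (fun i _ => hθ0 i) (Finset.mem_univ j)
  -- per-cell bound
  have hperc : ∀ c, θ j * ∫ x in cell c, f j x ∂ν
      - (1 / N) * ∫ x in cell c, (∑ i, f i x) ∂ν ≤ ∫ x in Dc c j, f j x ∂ν := by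
    intro c
    set Lc : ℝ := ∫ x in cell c, (∑ i, f i x) ∂ν with hLc
    have hLc0 : 0 ≤ Lc := setIntegral_nonneg (hcellmeas c) fun x _ => F_nonneg hf_nonneg x
    have hi : ∫ x in Dc c j, f j x ∂ν ≥ (((c j : ℕ):ℝ) / N) * (θ j * Lc) := by
      have hpt : ∀ x ∈ Dc c j, (((c j : ℕ):ℝ) / N) * (∑ i, f i x) ≤ f j x := by
        intro x hx
        have := hcell_lb c x (hDc_sub c j hx) j
        rw [div_mul_eq_mul_div, div_le_iff₀ hNR, mul_comm (f j x) (N:ℝ)]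
        exact this
      calc (((c j : ℕ):ℝ) / N) * (θ j * Lc)
          = (((c j : ℕ):ℝ) / N) * ∫ x in Dc c j, (∑ i, f i x) ∂ν := by rw [hDc4 c j]
        _ = ∫ x in Dc c j, (((c j : ℕ):ℝ) / N) * (∑ i, f i x) ∂ν := (integral_const_mul _ _).symm
        _ ≤ ∫ x in Dc c j, f j x ∂ν := by
            refine setIntegral_mono_on (((F_int hf_int).const_mul _).integrableOn)
              ((hf_int j).integrableOn) (hDc1 c j) hpt
    have hii : ∫ x in cell c, f j x ∂ν ≤ ((((c j : ℕ):ℝ) + 1) / N) * Lc := by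
      have hpt : ∀ x ∈ cell c, f j x ≤ ((((c j : ℕ):ℝ) + 1) / N) * (∑ i, f i x) := by
        intro x hx
        have := hcell_ub c x hx j
        rw [div_mul_eq_mul_div, le_div_iff₀ hNR, mul_comm (f j x) (N:ℝ)]
        exact this
      calc ∫ x in cell c, f j x ∂ν
          ≤ ∫ x in cell c, ((((c j : ℕ):ℝ) + 1) / N) * (∑ i, f i x) ∂ν :=
            setIntegral_mono_on ((hf_int j).integrableOn)
              (((F_int hf_int).const_mul _).integrableOn) (hcellmeas c) hpt
        _ = ((((c j : ℕ):ℝ) + 1) / N) * Lc := integral_const_mul _ _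
    have hchain : θ j * ∫ x in cell c, f j x ∂ν - (1/N) * Lc
        ≤ (((c j : ℕ):ℝ) / N) * (θ j * Lc) := by
      have h1 : θ j * ∫ x in cell c, f j x ∂ν ≤ θ j * (((((c j : ℕ):ℝ) + 1) / N) * Lc) :=
        mul_le_mul_of_nonneg_left hii (hθ0 j)
      have h2 : θ j * (((((c j : ℕ):ℝ) + 1) / N) * Lc)
          = (((c j : ℕ):ℝ) / N) * (θ j * Lc) + θ j * ((1/N) * Lc) := by ring
      have h3 : θ j * ((1/N) * Lc) ≤ (1/N) * Lc := by
        have : 0 ≤ (1/N : ℝ) * Lc := mul_nonneg (by positivity) hLc0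
        nlinarith
      linarith
    linarith
  -- sum over cells
  have hsum_cells_feq : ∑ c, ∫ x in cell c, f j x ∂ν = ∫ x in E ∩ {x | (∑ i, f i x) ≠ 0}, f j x ∂ν := by
    rw [← hcells_cover, integral_iUnion hcellmeas hcelldisj ((hf_int j).integrableOn),
      tsum_fintype]
  have hres_f : ∫ x in E, f j x ∂ν = ∫ x in E ∩ {x | (∑ i, f i x) ≠ 0}, f j x ∂ν := by
    have hEsplit : E = (E ∩ {x | (∑ i, f i x) ≠ 0}) ∪ res := by
      rw [hres]
      ext x
      by_cases h : (∑ i, f i x) = 0 <;> simp [h]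
    have hdisj : Disjoint (E ∩ {x | (∑ i, f i x) ≠ 0}) res := by
      refine Set.disjoint_left.2 fun x hx hx' => hx.2 hx'.2
    have hres_zero : ∫ x in res, f j x ∂ν = 0 := by
      refine setIntegral_eq_zero_of_forall_eq_zero fun x hx => ?_
      have h1 : f j x ≤ 0 := hx.2 ▸ f_le_F hf_nonneg j x
      exact le_antisymm h1 (hf_nonneg j x)
    have hu : ∫ x in (E ∩ {x | (∑ i, f i x) ≠ 0}) ∪ res, f j x ∂ν
        = ∫ x in E ∩ {x | (∑ i, f i x) ≠ 0}, f j x ∂ν + ∫ x in res, f j x ∂ν :=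
      setIntegral_union hdisj hresmeas ((hf_int j).integrableOn) ((hf_int j).integrableOn)
    rw [← hEsplit] at hu
    rw [hu, hres_zero, add_zero]
  have hsum_cells_F : ∑ c, ∫ x in cell c, (∑ i, f i x) ∂ν ≤ Mtot := by
    have h0 : ∑ c, ∫ x in cell c, (∑ i, f i x) ∂ν = ∫ x in ⋃ c, cell c, (∑ i, f i x) ∂ν := by
      rw [integral_iUnion hcellmeas hcelldisj ((F_int hf_int).integrableOn), tsum_fintype]
    rw [h0, hMtot]
    exact setIntegral_le_integral (F_int hf_int)
      (Filter.Eventually.of_forall fun x => F_nonneg hf_nonneg x)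
  have hDj_ge : ∑ c, ∫ x in Dc c j, f j x ∂ν ≤ ∫ x in D j, f j x ∂ν := by
    have h1 : ∑ c, ∫ x in Dc c j, f j x ∂ν = ∫ x in ⋃ c, Dc c j, f j x ∂ν := by
      rw [integral_iUnion (fun c => hDc1 c j) ?_ ((hf_int j).integrableOn), tsum_fintype]
      intro a b hab
      exact Set.disjoint_left.2 fun x hx hx' =>
        Set.disjoint_left.1 (hcelldisj hab) (hDc_sub a j hx) (hDc_sub b j hx')
    rw [h1]
    refine setIntegral_mono_set ((hf_int j).integrableOn)
      (Filter.Eventually.of_forall fun x => hf_nonneg j x)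
      (Filter.Eventually.of_forall fun x hx => ?_)
    rw [hD]
    exact Or.inl hx
  calc θ j * ∫ x in E, f j x ∂ν - ε
      ≤ θ j * ∫ x in E, f j x ∂ν - (1/N) * Mtot := by
        have : (1/N : ℝ) * Mtot ≤ ε := by
          rw [div_mul_eq_mul_div, one_mul, div_le_iff₀ hNR]
          linarith [hMN]
        linarith
    _ = θ j * (∑ c, ∫ x in cell c, f j x ∂ν) - (1/N) * Mtot := by
        rw [hsum_cells_feq, ← hres_f]
    _ ≤ ∑ c, (θ j * ∫ x in cell c, f j x ∂ν - (1/N) * ∫ x in cell c, (∑ i, f i x) ∂ν) := by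
        rw [Finset.sum_sub_distrib, ← Finset.mul_sum, ← Finset.mul_sum]
        have : (1/N : ℝ) * ∑ c, ∫ x in cell c, (∑ i, f i x) ∂ν ≤ (1/N) * Mtot :=
          mul_le_mul_of_nonneg_left hsum_cells_F (by positivity)
        linarith
    _ ≤ ∑ c, ∫ x in Dc c j, f j x ∂ν := Finset.sum_le_sum fun c _ => hperc c
    _ ≤ ∫ x in D j, f j x ∂ν := hDj_ge

end division2

section mixing
variable {C : Type} [MeasurableSpace C] {m : ℕ} [Nonempty (Fin m)]
  {ν : Measure C} [IsFiniteMeasure ν] {f : Fin m → C → ℝ}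
  (hf_meas : ∀ j, Measurable (f j))
  (hf_nonneg : ∀ j x, 0 ≤ f j x)
  (hf_int : ∀ j, Integrable (f j) ν)
  (hsplitI : ∀ A : Set C, MeasurableSet A → 0 < ∫ x in A, (∑ j, f j x) ∂ν →
    ∃ B, MeasurableSet B ∧ B ⊆ A ∧ 0 < ∫ x in B, (∑ j, f j x) ∂ν ∧
      0 < ∫ x in A \ B, (∑ j, f j x) ∂ν)

include hf_meas hf_nonneg hf_int hsplitI in
/-- mixing finitely many partitions: a convex combination of partition value vectors is
approximately dominated by an actual partition value vector -/
lemma mix_partitions (n : ℕ) (P : Fin n → Fin m → Set C)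
    (hPm : ∀ t j, MeasurableSet (P t j))
    (hPd : ∀ t, Pairwise (Function.onFun Disjoint (P t)))
    (hPc : ∀ t, (⋃ j, P t j) = Set.univ)
    (p : Fin n → ℝ) (hp0 : ∀ t, 0 ≤ p t) (hp1 : ∑ t, p t = 1)
    {ε : ℝ} (hε : 0 < ε) :
    ∃ A : Fin m → Set C, (∀ j, MeasurableSet (A j)) ∧
      Pairwise (Function.onFun Disjoint A) ∧ (⋃ j, A j) = Set.univ ∧
      ∀ j, (∑ t, p t * ∫ x in P t j, f j x ∂ν) - ε ≤ ∫ x in A j, f j x ∂ν := by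
  classical
  -- cells
  set cell : (Fin n → Fin m) → Set C := fun γ => ⋂ t, P t (γ t) with hcell
  have hcellmeas : ∀ γ, MeasurableSet (cell γ) :=
    fun γ => MeasurableSet.iInter fun t => hPm t (γ t)
  have hcelldisj : Pairwise (Function.onFun Disjoint cell) := by
    intro γ γ' hγ
    obtain ⟨t, ht⟩ := Function.ne_iff.1 hγ
    refine Set.disjoint_left.2 fun x hx hx' => ?_
    have h1 : x ∈ P t (γ t) := Set.mem_iInter.1 hx t
    have h2 : x ∈ P t (γ' t) := Set.mem_iInter.1 hx' t
    exact Set.disjoint_left.1 (hPd t ht) h1 h2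
  have hchoice : ∀ x : C, ∃ γ : Fin n → Fin m, x ∈ cell γ := by
    intro x
    have : ∀ t : Fin n, ∃ j, x ∈ P t j := by
      intro t
      have := hPc t
      have hx : x ∈ ⋃ j, P t j := this ▸ Set.mem_univ x
      exact Set.mem_iUnion.1 hx
    choose γ hγ using this
    exact ⟨γ, Set.mem_iInter.2 hγ⟩
  have hcellcover : (⋃ γ, cell γ) = Set.univ :=
    Set.eq_univ_of_forall fun x => Set.mem_iUnion.2 (hchoice x)
  -- each P t j is the union of the cells with γ t = j
  have hPdecomp : ∀ t j, P t j = ⋃ γ ∈ Finset.univ.filter (fun γ : Fin n → Fin m => γ t = j),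
      cell γ := by
    intro t j
    ext x
    constructor
    · intro hx
      obtain ⟨γ, hγ⟩ := hchoice x
      have hγt : γ t = j := by
        by_contra hne
        exact Set.disjoint_left.1 (hPd t hne) (Set.mem_iInter.1 hγ t) hx
      exact Set.mem_biUnion (Finset.mem_filter.2 ⟨Finset.mem_univ _, hγt⟩) hγ
    · intro hx
      obtain ⟨γ, hγmem, hγ⟩ := Set.mem_iUnion₂.1 hx
      have := Set.mem_iInter.1 hγ t
      rwa [(Finset.mem_filter.1 hγmem).2] at this
  -- weights per cell
  set θ : (Fin n → Fin m) → Fin m → ℝ := fun γ j => ∑ t, if γ t = j then p t else 0 with hθ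
  have hθ0 : ∀ γ j, 0 ≤ θ γ j := fun γ j =>
    Finset.sum_nonneg fun t _ => by split_ifs; exacts [hp0 t, le_refl 0]
  have hθ1 : ∀ γ, ∑ j, θ γ j = 1 := by
    intro γ
    rw [hθ, ← hp1, Finset.sum_comm]
    refine Finset.sum_congr rfl fun t _ => ?_
    simp [Finset.sum_ite_eq' Finset.univ (γ t) (fun _ => p t)]
  -- sub-partitions
  set ε' : ℝ := ε / (Fintype.card (Fin n → Fin m)) with hε'
  have hcard : (0:ℝ) < (Fintype.card (Fin n → Fin m)) := by
    have : 0 < Fintype.card (Fin n → Fin m) := Fintype.card_pos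
    exact_mod_cast this
  have hε'0 : 0 < ε' := div_pos hε hcard
  have hDex : ∀ γ, ∃ D : Fin m → Set C, (∀ j, MeasurableSet (D j)) ∧
      Pairwise (Function.onFun Disjoint D) ∧ (⋃ j, D j) = cell γ ∧
      ∀ j, θ γ j * ∫ x in cell γ, f j x ∂ν - ε' ≤ ∫ x in D j, f j x ∂ν :=
    fun γ => prop_div hf_meas hf_nonneg hf_int hsplitI (cell γ) (hcellmeas γ)
      (θ γ) (hθ0 γ) (hθ1 γ) hε'0
  choose D hD1 hD2 hD3 hD4 using hDex
  have hD_sub : ∀ γ j, D γ j ⊆ cell γ := fun γ j => (hD3 γ) ▸ Set.subset_iUnion (D γ) j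
  set A : Fin m → Set C := fun j => ⋃ γ, D γ j with hA
  have hAmeas : ∀ j, MeasurableSet (A j) := fun j => MeasurableSet.iUnion fun γ => hD1 γ j
  have hAdisj : Pairwise (Function.onFun Disjoint A) := by
    intro a b hab
    refine Set.disjoint_left.2 fun x hx hx' => ?_
    obtain ⟨γ, hγ⟩ := Set.mem_iUnion.1 hx
    obtain ⟨γ', hγ'⟩ := Set.mem_iUnion.1 hx'
    rcases eq_or_ne γ γ' with rfl | hne
    · exact Set.disjoint_left.1 (hD2 γ hab) hγ hγ'
    · exact Set.disjoint_left.1 (hcelldisj hne) (hD_sub γ a hγ) (hD_sub γ' b hγ')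
  have hAcover : (⋃ j, A j) = Set.univ := by
    refine Set.eq_univ_of_forall fun x => ?_
    obtain ⟨γ, hγ⟩ := hchoice x
    have : x ∈ ⋃ j', D γ j' := by rw [hD3 γ]; exact hγ
    obtain ⟨j', hj'⟩ := Set.mem_iUnion.1 this
    exact Set.mem_iUnion.2 ⟨j', Set.mem_iUnion.2 ⟨γ, hj'⟩⟩
  refine ⟨A, hAmeas, hAdisj, hAcover, fun j => ?_⟩
  have hAint : ∫ x in A j, f j x ∂ν = ∑ γ, ∫ x in D γ j, f j x ∂ν := by
    rw [hA]
    rw [integral_iUnion (fun γ => hD1 γ j) ?_ ((hf_int j).integrableOn), tsum_fintype]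
    intro a b hab
    exact Set.disjoint_left.2 fun x hx hx' =>
      Set.disjoint_left.1 (hcelldisj hab) (hD_sub a j hx) (hD_sub b j hx')
  have hswap : ∑ γ, θ γ j * ∫ x in cell γ, f j x ∂ν = ∑ t, p t * ∫ x in P t j, f j x ∂ν := by
    have h1 : ∀ γ, θ γ j * ∫ x in cell γ, f j x ∂ν
        = ∑ t, (if γ t = j then p t else 0) * ∫ x in cell γ, f j x ∂ν := by
      intro γ
      rw [hθ, Finset.sum_mul]
    rw [Finset.sum_congr rfl fun γ _ => h1 γ, Finset.sum_comm]
    refine Finset.sum_congr rfl fun t _ => ?_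
    have h2 : ∫ x in P t j, f j x ∂ν
        = ∑ γ ∈ Finset.univ.filter (fun γ : Fin n → Fin m => γ t = j),
            ∫ x in cell γ, f j x ∂ν := by
      rw [hPdecomp t j]
      refine integral_biUnion_finset _ (fun γ _ => hcellmeas γ) ?_
        (fun γ _ => (hf_int j).integrableOn)
      intro a ha b hb hab
      exact hcelldisj hab
    rw [h2, Finset.mul_sum]
    rw [Finset.sum_filter]
    refine Finset.sum_congr rfl fun γ _ => ?_
    split_ifs <;> simp
  have hsum_ε : ∑ _γ : Fin n → Fin m, ε' = ε := by
    rw [Finset.sum_const, Finset.card_univ, nsmul_eq_mul, hε']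
    have hm0 : (0:ℝ) < ((m:ℝ) ^ n) := by
      have hmpos : 0 < m := Fin.pos (Classical.arbitrary (Fin m))
      have : (0:ℝ) < (m:ℝ) := by exact_mod_cast hmpos
      positivity
    field_simp
  calc (∑ t, p t * ∫ x in P t j, f j x ∂ν) - ε
      = ∑ γ, (θ γ j * ∫ x in cell γ, f j x ∂ν - ε') := by
        rw [Finset.sum_sub_distrib, hswap, hsum_ε]
    _ ≤ ∑ γ, ∫ x in D γ j, f j x ∂ν := Finset.sum_le_sum fun γ _ => hD4 γ j
    _ = ∫ x in A j, f j x ∂ν := hAint.symm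

end mixing

section helpers
open Filter

lemma cesaro {s' : ℕ → ℝ} (h0 : ∀ t, 0 ≤ s' t) (hlim : Tendsto s' atTop (𝓝 0))
    {ε : ℝ} (hε : 0 < ε) :
    ∃ K : ℝ, 0 ≤ K ∧ ∀ T, ∑ t ∈ Finset.range T, (s' t)^2 ≤ K + ε * ∑ t ∈ Finset.range T, s' t := by
  have hev : ∀ᶠ t in atTop, s' t < ε := hlim.eventually_lt_const hε
  obtain ⟨T0, hT0⟩ := eventually_atTop.1 hev
  refine ⟨∑ t ∈ Finset.range T0, (s' t)^2, Finset.sum_nonneg fun t _ => sq_nonneg _, fun T => ?_⟩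
  rcases le_or_gt T T0 with h | h
  · have h1 : ∑ t ∈ Finset.range T, (s' t)^2 ≤ ∑ t ∈ Finset.range T0, (s' t)^2 :=
      Finset.sum_le_sum_of_subset_of_nonneg (Finset.range_subset_range.2 h)
        (fun t _ _ => sq_nonneg _)
    have h2 : 0 ≤ ε * ∑ t ∈ Finset.range T, s' t :=
      mul_nonneg hε.le (Finset.sum_nonneg fun t _ => h0 t)
    linarith
  · have hle : T0 ≤ T := h.le
    have hsplit := Finset.sum_range_add_sum_Ico (fun t => (s' t)^2) hle
    have hsplit' := Finset.sum_range_add_sum_Ico (fun t => s' t) hle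
    have h2 : ∑ t ∈ Finset.Ico T0 T, (s' t)^2 ≤ ε * ∑ t ∈ Finset.Ico T0 T, s' t := by
      rw [Finset.mul_sum]
      refine Finset.sum_le_sum fun t ht => ?_
      have htT0 : T0 ≤ t := (Finset.mem_Ico.1 ht).1
      have := hT0 t htT0
      calc (s' t)^2 = s' t * s' t := sq (s' t) ▸ (pow_two (s' t))
        _ ≤ ε * s' t := mul_le_mul_of_nonneg_right this.le (h0 t)
    have h3 : ∑ t ∈ Finset.Ico T0 T, s' t ≤ ∑ t ∈ Finset.range T, s' t := by
      rw [← hsplit']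
      have : 0 ≤ ∑ t ∈ Finset.range T0, s' t := Finset.sum_nonneg fun t _ => h0 t
      linarith
    have h4 : ε * ∑ t ∈ Finset.Ico T0 T, s' t ≤ ε * ∑ t ∈ Finset.range T, s' t :=
      mul_le_mul_of_nonneg_left h3 hε.le
    calc ∑ t ∈ Finset.range T, (s' t)^2
        = ∑ t ∈ Finset.range T0, (s' t)^2 + ∑ t ∈ Finset.Ico T0 T, (s' t)^2 := hsplit.symm
      _ ≤ ∑ t ∈ Finset.range T0, (s' t)^2 + ε * ∑ t ∈ Finset.range T, s' t := by linarith

lemma integral_eq_sum_partition {C : Type} [MeasurableSpace C] {m : ℕ}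
    (ν : Measure C) {A : Fin m → Set C}
    (hAm : ∀ j, MeasurableSet (A j))
    (hAd : ∀ i j, i ≠ j → Disjoint (A i) (A j))
    (hAc : (⋃ j, A j) = Set.univ) {F : C → ℝ} (hF : Integrable F ν) :
    ∫ x, F x ∂ν = ∑ j, ∫ x in A j, F x ∂ν := by
  have h1 : ∫ x, F x ∂ν = ∫ x in ⋃ j, A j, F x ∂ν := by
    rw [hAc, Measure.restrict_univ]
  rw [h1, integral_iUnion hAm (fun i j hij => hAd i j hij) hF.integrableOn, tsum_fintype]

end helpers

set_option maxHeartbeats 1000000 in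
/-- Convergence of the subgradient recursion on the simplex.
Under (CD) (nonatomicity) and (MAC), starting from any `α⁰` in the relative
interior of the simplex and any diminishing step size rule `s`, there exist a
smaller diminishing step size rule `s'`, a sequence `αˢ` in the relative interior
of the simplex and a sequence `u` of partition value vectors of maxsum partitions
for the `αˢ t`, following the subgradient update rule, such that
`min_{i ≤ t} g(αˢ i) → inf_{α ∈ Δ} g(α) = v`, the maxmin value. -/
theorem subgradient_method_converges
    {C : Type} [MeasurableSpace C] {m : ℕ} (hm : 2 ≤ m)
    (ν : Measure C) [IsFiniteMeasure ν]
    (μ : Fin m → Measure C) [∀ j, IsProbabilityMeasure (μ j)]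
    (f : Fin m → C → ℝ)
    (hf_meas : ∀ j, Measurable (f j))
    (hf_nonneg : ∀ j x, 0 ≤ f j x)
    (hf_int : ∀ j, Integrable (f j) ν)
    (hdens : ∀ j (A : Set C), MeasurableSet A → (μ j A).toReal = ∫ x in A, f j x ∂ν)
    (hna : ∀ j (A : Set C), MeasurableSet A → 0 < μ j A →
      ∃ B, MeasurableSet B ∧ B ⊆ A ∧ 0 < μ j B ∧ 0 < μ j (A \ B))
    (hmac : ∀ j k (A : Set C), MeasurableSet A → 0 < μ j A → 0 < μ k A)
    (s : ℕ → ℝ) (hs_pos : ∀ t, 0 < s t)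
    (hs_lim : Tendsto s atTop (𝓝 0))
    (hs_div : Tendsto (fun n => ∑ t ∈ Finset.range n, s t) atTop atTop)
    (α0 : Fin m → ℝ) (hα0_pos : ∀ j, 0 < α0 j) (hα0_sum : ∑ j, α0 j = 1) :
    ∃ (s' : ℕ → ℝ) (αs : ℕ → Fin m → ℝ) (u : ℕ → Fin m → ℝ),
      (∀ t, 0 < s' t ∧ s' t ≤ s t) ∧
      Tendsto s' atTop (𝓝 0) ∧
      Tendsto (fun n => ∑ t ∈ Finset.range n, s' t) atTop atTop ∧
      αs 0 = α0 ∧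
      (∀ t, (∀ j, 0 < αs t j) ∧ ∑ j, αs t j = 1) ∧
      (∀ t, ∃ B : Fin m → Set C,
        (∀ i, MeasurableSet (B i)) ∧
        (∀ i j, i ≠ j → Disjoint (B i) (B j)) ∧
        (⋃ i, B i) = Set.univ ∧
        (∀ k, ∀ᵐ x ∂ν, x ∈ B k → ∀ h, αs t h * f h x ≤ αs t k * f k x) ∧
        u t = fun j => (μ j (B j)).toReal) ∧
      (∀ t i, αs (t + 1) i = αs t i - s' t * (u t i - (∑ j, u t j) / (m : ℝ))) ∧
      Tendsto (fun t => ⨅ i : Fin (t + 1), ∫ x, (⨆ j, αs i j * f j x) ∂ν) atTop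
        (𝓝 (sInf {r : ℝ | ∃ α : Fin m → ℝ, (∀ j, 0 ≤ α j) ∧ (∑ j, α j = 1) ∧
            r = ∫ x, (⨆ j, α j * f j x) ∂ν})) ∧
      sInf {r : ℝ | ∃ α : Fin m → ℝ, (∀ j, 0 ≤ α j) ∧ (∑ j, α j = 1) ∧
            r = ∫ x, (⨆ j, α j * f j x) ∂ν} =
        sSup {r : ℝ | ∃ A : Fin m → Set C, (∀ i, MeasurableSet (A i)) ∧
            (∀ i j, i ≠ j → Disjoint (A i) (A j)) ∧ (⋃ i, A i) = Set.univ ∧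
            r = ⨅ j, (μ j (A j)).toReal} := by
  classical
  haveI hnem : Nonempty (Fin m) := ⟨⟨0, by omega⟩⟩
  have hmR : (2:ℝ) ≤ (m:ℝ) := by exact_mod_cast hm
  have hmR0 : (0:ℝ) < (m:ℝ) := by linarith
  -- basic facts
  have hf_one : ∀ j, ∫ x, f j x ∂ν = 1 := by
    intro j
    have h := hdens j Set.univ MeasurableSet.univ
    rw [measure_univ, ENNReal.toReal_one, Measure.restrict_univ] at h
    exact h.symm
  set g : (Fin m → ℝ) → ℝ := fun α => ∫ x, (⨆ j, α j * f j x) ∂ν with hgdef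
  set uu : (Fin m → ℝ) → Fin m → ℝ := uval ν f with huudef
  have hu0 : ∀ α j, 0 ≤ uu α j := fun α j => uval_nonneg (ν := ν) (f := f) hf_meas hf_nonneg α j
  have hu1 : ∀ α j, uu α j ≤ 1 := by
    intro α j
    have := uval_le_int (ν := ν) (f := f) hf_meas hf_nonneg hf_int α j
    rw [hf_one j] at this
    exact this
  have hgsum : ∀ α, (∀ j, 0 ≤ α j) → g α = ∑ k, α k * uu α k := by
    intro α hα
    exact g_eq_sum hf_meas hf_nonneg hf_int α hα
  have hpair : ∀ α β, (∀ j, 0 ≤ β j) → ∑ k, β k * uu α k ≤ g β :=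
    fun α β hβ => sum_mul_uval_le hf_meas hf_nonneg hf_int α β hβ
  have hcoord : ∀ α, (∀ j, 0 ≤ α j) → ∀ k, α k ≤ g α := by
    intro α hα k
    have := coord_le_g hf_meas hf_nonneg hf_int α hα k
    rw [hf_one k, mul_one] at this
    exact this
  have hintpos : ∀ j (A : Set C), MeasurableSet A →
      (0 < μ j A ↔ 0 < ∫ x in A, f j x ∂ν) := by
    intro j A hA
    rw [← hdens j A hA]
    constructor
    · intro h
      exact ENNReal.toReal_pos h.ne' (measure_ne_top _ _)
    · intro h
      by_contra hc
      push_neg at hc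
      have : μ j A = 0 := le_antisymm hc (zero_le)
      rw [this] at h
      simp at h
  have hsplitI : ∀ A : Set C, MeasurableSet A → 0 < ∫ x in A, (∑ j, f j x) ∂ν →
      ∃ B, MeasurableSet B ∧ B ⊆ A ∧ 0 < ∫ x in B, (∑ j, f j x) ∂ν ∧
        0 < ∫ x in A \ B, (∑ j, f j x) ∂ν := by
    intro A hA hpos
    have hsum_int : ∫ x in A, (∑ j, f j x) ∂ν = ∑ j, ∫ x in A, f j x ∂ν :=
      integral_finset_sum _ (fun j _ => (hf_int j).integrableOn)
    obtain ⟨j, hj⟩ : ∃ j, 0 < ∫ x in A, f j x ∂ν := by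
      by_contra hc
      push_neg at hc
      have : ∫ x in A, (∑ j, f j x) ∂ν ≤ 0 := by
        rw [hsum_int]
        exact Finset.sum_nonpos fun j _ => hc j
      linarith
    have hμpos : 0 < μ j A := (hintpos j A hA).2 hj
    obtain ⟨B, hB1, hB2, hB3, hB4⟩ := hna j A hA hμpos
    have hdom : ∀ (S : Set C), MeasurableSet S → 0 < μ j S →
        0 < ∫ x in S, (∑ i, f i x) ∂ν := by
      intro S hS hSpos
      have h5 : 0 < ∫ x in S, f j x ∂ν := (hintpos j S hS).1 hSpos
      have h6 : ∫ x in S, f j x ∂ν ≤ ∫ x in S, (∑ i, f i x) ∂ν :=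
        setIntegral_mono_on ((hf_int j).integrableOn) ((F_int hf_int).integrableOn) hS
          fun x _ => f_le_F hf_nonneg j x
      linarith
    exact ⟨B, hB1, hB2, hdom B hB1 hB3, hdom (A \ B) (hA.diff hB1) hB4⟩
  -- the boundary-repulsion constant δ
  have hδpair : ∃ δp : ℝ, 0 < δp ∧ ∀ j k : Fin m, j ≠ k → ∀ d', 0 < d' → d' ≤ δp →
      ∫ x in {x | f k x ≤ d' * f j x}, f j x ∂ν ≤ 1/(m^2:ℝ) := by
    have hpairs : ∀ jk : Fin m × Fin m, ∃ d : ℝ, 0 < d ∧ (jk.1 ≠ jk.2 →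
        ∫ x in {x | f jk.2 x ≤ d * f jk.1 x}, f jk.1 x ∂ν ≤ 1/(m^2:ℝ)) := by
      rintro ⟨j, k⟩
      by_cases hjk : j = k
      · exact ⟨1, one_pos, fun h => absurd hjk h⟩
      · set W : ℕ → Set C := fun n => {x | f k x ≤ (1/(n+1:ℝ)) * f j x} with hW
        have hWmeas : ∀ n, MeasurableSet (W n) := fun n =>
          measurableSet_le (hf_meas k) ((hf_meas j).const_mul _)
        have hWanti : Antitone W := by
          intro a b hab x hx
          have hx' : f k x ≤ (1/(b+1:ℝ)) * f j x := hx
          show f k x ≤ (1/(a+1:ℝ)) * f j x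
          refine le_trans hx' ?_
          have h1 : (1/(b+1:ℝ)) ≤ (1/(a+1:ℝ)) :=
            one_div_le_one_div_of_le (by positivity)
              (by exact_mod_cast Nat.succ_le_succ hab)
          exact mul_le_mul_of_nonneg_right h1 (hf_nonneg j x)
        have hWlim : Tendsto (fun n => μ j (W n)) atTop (𝓝 (μ j (⋂ n, W n))) :=
          tendsto_measure_iInter_atTop (fun n => (hWmeas n).nullMeasurableSet) hWanti
            ⟨0, measure_ne_top _ _⟩
        have hmeas0 : MeasurableSet {x | f k x = 0} := hf_meas k (measurableSet_singleton 0)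
        have hInter : μ j (⋂ n, W n) = 0 := by
          have hsub : (⋂ n, W n) ⊆ {x | f k x = 0} := by
            intro x hx
            have hall : ∀ n : ℕ, f k x ≤ (1/(n+1:ℝ)) * f j x := fun n => Set.mem_iInter.1 hx n
            have hlim0 : Tendsto (fun n : ℕ => (1/(n+1:ℝ)) * f j x) atTop (𝓝 0) := by
              have h2 := tendsto_one_div_add_atTop_nhds_zero_nat (𝕜 := ℝ)
              have := h2.mul_const (f j x)
              simpa using this
            have h3 : f k x ≤ 0 := ge_of_tendsto hlim0 (Filter.Eventually.of_forall hall)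
            exact le_antisymm h3 (hf_nonneg k x)
          have hzero : μ j {x | f k x = 0} = 0 := by
            have hk0 : μ k {x | f k x = 0} = 0 := by
              have h4 : (μ k {x | f k x = 0}).toReal = 0 := by
                rw [hdens k _ hmeas0]
                rw [setIntegral_congr_fun hmeas0 (fun x hx => hx)]
                simp
              rcases (ENNReal.toReal_eq_zero_iff _).1 h4 with h | h
              · exact h
              · exact absurd h (measure_ne_top _ _)
            by_contra hc
            have hpos : 0 < μ j {x | f k x = 0} := lt_of_le_of_ne (zero_le) (Ne.symm hc)
            have := hmac j k _ hmeas0 hpos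
            rw [hk0] at this
            exact lt_irrefl _ this
          exact le_antisymm (le_trans (measure_mono hsub) hzero.le) (zero_le)
        rw [hInter] at hWlim
        have hev : ∀ᶠ n in atTop, μ j (W n) < ENNReal.ofReal (1/(m^2:ℝ)) :=
          hWlim.eventually_lt_const (ENNReal.ofReal_pos.2 (by positivity))
        obtain ⟨n, hn⟩ := hev.exists
        refine ⟨1/(n+1:ℝ), by positivity, fun _ => ?_⟩
        have h1 : ∫ x in W n, f j x ∂ν ≤ 1/(m^2:ℝ) := by
          rw [← hdens j _ (hWmeas n)]
          exact ENNReal.toReal_le_of_le_ofReal (by positivity) hn.le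
        exact h1
    choose dd hdd using hpairs
    refine ⟨Finset.univ.inf' Finset.univ_nonempty dd, ?_, ?_⟩
    · rw [Finset.lt_inf'_iff]
      exact fun jk _ => (hdd jk).1
    · intro j k hjk d' hd'0 hd'le
      have h1 := (hdd (j,k)).2 hjk
      have hddle : d' ≤ dd (j,k) :=
        le_trans hd'le (Finset.inf'_le _ (Finset.mem_univ (j,k)))
      have hsub : {x | f k x ≤ d' * f j x} ⊆ {x | f k x ≤ dd (j,k) * f j x} := by
        intro x hx
        exact le_trans hx (mul_le_mul_of_nonneg_right hddle (hf_nonneg j x))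
      refine le_trans ?_ h1
      exact setIntegral_mono_set ((hf_int j).integrableOn)
        (Filter.Eventually.of_forall fun x => hf_nonneg j x) hsub.eventuallyLE
  obtain ⟨δp, hδp0, hδp⟩ := hδpair
  set δ : ℝ := min (δp / (2 * m)) (1 / (4 * m)) with hδdef
  have hδ0 : 0 < δ := lt_min (by positivity) (by positivity)
  have hδsmall : 2 * δ ≤ 1 / (2 * m) := by
    have h1 : δ ≤ 1 / (4 * m) := min_le_right _ _
    rw [le_div_iff₀ (by positivity : (0:ℝ) < 4 * m)] at h1
    rw [le_div_iff₀ (by positivity : (0:ℝ) < 2 * m)]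
    nlinarith
  have hδp' : 2 * δ * m ≤ δp := by
    have h1 : δ ≤ δp / (2 * m) := min_le_left _ _
    rw [le_div_iff₀ (by positivity)] at h1
    nlinarith
  -- key: small coordinates get small share
  have hkey : ∀ α : Fin m → ℝ, (∀ j, 0 ≤ α j) → (∑ j, α j = 1) →
      ∀ j, α j ≤ 2*δ → uu α j ≤ 1/(m^2:ℝ) := by
    intro α hα0 hα1 j hj2δ
    obtain ⟨k, hk⟩ : ∃ k, 1/(m:ℝ) ≤ α k := by
      by_contra hcon
      push_neg at hcon
      have h1 : ∑ i, α i < ∑ _i : Fin m, 1/(m:ℝ) :=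
        Finset.sum_lt_sum_of_nonempty Finset.univ_nonempty fun i _ => hcon i
      rw [hα1, Finset.sum_const, Finset.card_univ, Fintype.card_fin, nsmul_eq_mul,
        mul_one_div, div_self hmR0.ne'] at h1
      exact lt_irrefl _ h1
    have hkj : k ≠ j := by
      intro h
      rw [h] at hk
      have h2 : (1:ℝ)/(2*m) < 1/m := by
        rw [div_lt_div_iff₀ (by positivity) hmR0]
        nlinarith
      linarith [hδsmall, hj2δ]
    have hsub : part f α j ⊆ {x | f k x ≤ (2*δ*(m:ℝ)) * f j x} := by
      intro x hx
      have h1 : α k * f k x ≤ α j * f j x := part_spec α j hx k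
      have h2 : (1/(m:ℝ)) * f k x ≤ α k * f k x :=
        mul_le_mul_of_nonneg_right hk (hf_nonneg k x)
      have h3 : (1/(m:ℝ)) * f k x ≤ α j * f j x := le_trans h2 h1
      have h4 : f k x ≤ m * (α j * f j x) := by
        have h5 : f k x = m * ((1/(m:ℝ)) * f k x) := by field_simp
        rw [h5]
        exact mul_le_mul_of_nonneg_left h3 hmR0.le
      have h6 : α j * f j x ≤ 2*δ * f j x := mul_le_mul_of_nonneg_right hj2δ (hf_nonneg j x)
      calc f k x ≤ (m:ℝ) * (α j * f j x) := h4
        _ ≤ (m:ℝ) * (2*δ*f j x) := mul_le_mul_of_nonneg_left h6 hmR0.le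
        _ = (2*δ*m) * f j x := by ring
    calc uu α j ≤ ∫ x in {x | f k x ≤ (2*δ*(m:ℝ)) * f j x}, f j x ∂ν :=
        setIntegral_mono_set ((hf_int j).integrableOn)
          (Filter.Eventually.of_forall fun x => hf_nonneg j x) hsub.eventuallyLE
      _ ≤ 1/(m^2:ℝ) := hδp j k (Ne.symm hkj) _ (by positivity) hδp'
  have hubar : ∀ α : Fin m → ℝ, (∀ j, 0 ≤ α j) → (∑ j, α j = 1) →
      1/(m:ℝ) ≤ ∑ k, uu α k := by
    intro α hα0 hα1
    obtain ⟨k, hk⟩ : ∃ k, 1/(m:ℝ) ≤ α k := by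
      by_contra hcon
      push_neg at hcon
      have : ∑ j, α j < ∑ _j : Fin m, 1/(m:ℝ) :=
        Finset.sum_lt_sum_of_nonempty Finset.univ_nonempty fun j _ => hcon j
      rw [hα1, Finset.sum_const, Finset.card_univ, Fintype.card_fin, nsmul_eq_mul] at this
      rw [mul_one_div, div_self hmR0.ne'] at this
      exact lt_irrefl _ this
    calc 1/(m:ℝ) ≤ α k := hk
      _ ≤ g α := hcoord α hα0 k
      _ = ∑ k, α k * uu α k := hgsum α hα0
      _ ≤ ∑ k, uu α k := by
          refine Finset.sum_le_sum fun i _ => ?_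
          have hαle1 : α i ≤ 1 := by
            rw [← hα1]
            exact Finset.single_le_sum (fun j _ => hα0 j) (Finset.mem_univ i)
          exact mul_le_of_le_one_left (hu0 α i) hαle1
  -- the dynamics
  set s' : ℕ → ℝ := fun t => min (s t) δ with hs'def
  have hs'pos : ∀ t, 0 < s' t := fun t => lt_min (hs_pos t) hδ0
  have hs'le : ∀ t, s' t ≤ s t := fun t => min_le_left _ _
  have hs'leδ : ∀ t, s' t ≤ δ := fun t => min_le_right _ _
  have hs'lim : Tendsto s' atTop (𝓝 0) := by
    have := hs_lim.min (tendsto_const_nhds (x := δ))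
    rwa [min_eq_left hδ0.le] at this
  have hs'div : Tendsto (fun n => ∑ t ∈ Finset.range n, s' t) atTop atTop := by
    have hev : ∀ᶠ t in atTop, s t < δ := hs_lim.eventually_lt_const hδ0
    obtain ⟨T0, hT0⟩ := eventually_atTop.1 hev
    have heq : ∀ t, T0 ≤ t → s' t = s t := fun t ht => min_eq_left (hT0 t ht).le
    have hge : ∀ n, T0 ≤ n → (∑ t ∈ Finset.range n, s t) - (∑ t ∈ Finset.range T0, s t)
        ≤ ∑ t ∈ Finset.range n, s' t := by
      intro n hn
      have h1 : ∑ t ∈ Finset.range n, (s t - s' t) ≤ ∑ t ∈ Finset.range T0, s t := by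
        have hsplit := Finset.sum_range_add_sum_Ico (fun t => s t - s' t) hn
        have h2 : ∑ t ∈ Finset.Ico T0 n, (s t - s' t) = 0 := by
          refine Finset.sum_eq_zero fun t ht => ?_
          rw [heq t (Finset.mem_Ico.1 ht).1, sub_self]
        have h3 : ∑ t ∈ Finset.range T0, (s t - s' t) ≤ ∑ t ∈ Finset.range T0, s t :=
          Finset.sum_le_sum fun t _ => by linarith [(hs'pos t).le]
        linarith [hsplit]
      have h4 : ∑ t ∈ Finset.range n, s' t
          = ∑ t ∈ Finset.range n, s t - ∑ t ∈ Finset.range n, (s t - s' t) := by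
        rw [← Finset.sum_sub_distrib]
        exact Finset.sum_congr rfl fun t _ => by ring
      linarith
    refine tendsto_atTop_mono' atTop ?_
      (tendsto_atTop_add_const_right atTop (-(∑ t ∈ Finset.range T0, s t)) hs_div)
    refine eventually_atTop.2 ⟨T0, fun n hn => ?_⟩
    have := hge n hn
    simpa [sub_eq_add_neg] using this
  set αs : ℕ → Fin m → ℝ := fun t => Nat.rec α0
    (fun t' α => fun i => α i - s' t' * (uu α i - (∑ j, uu α j) / (m : ℝ))) t with hαsdef
  have hαs0 : αs 0 = α0 := rfl
  have hαsrec : ∀ t i, αs (t+1) i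
      = αs t i - s' t * (uu (αs t) i - (∑ j, uu (αs t) j) / (m : ℝ)) := fun t i => rfl
  set ρ : ℝ := min δ (Finset.univ.inf' Finset.univ_nonempty α0) with hρdef
  have hρ0 : 0 < ρ := by
    refine lt_min hδ0 ?_
    rw [Finset.lt_inf'_iff]
    exact fun j _ => hα0_pos j
  have hρδ : ρ ≤ δ := min_le_left _ _
  have hinv : ∀ t, (∀ j, ρ ≤ αs t j) ∧ ∑ j, αs t j = 1 := by
    intro t
    induction t with
    | zero =>
      refine ⟨fun j => le_trans (min_le_right _ _) (Finset.inf'_le _ (Finset.mem_univ j)),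
        hα0_sum⟩
    | succ t ih =>
      obtain ⟨hpos, hsum⟩ := ih
      have hαnn : ∀ j, 0 ≤ αs t j := fun j => le_trans hρ0.le (hpos j)
      have hub_lb : 1/(m:ℝ) ≤ ∑ k, uu (αs t) k := hubar (αs t) hαnn hsum
      have hsumu_nn : 0 ≤ ∑ k, uu (αs t) k := Finset.sum_nonneg fun k _ => hu0 _ k
      have hub_ub : ∑ k, uu (αs t) k ≤ m := by
        calc ∑ k, uu (αs t) k ≤ ∑ _k : Fin m, (1:ℝ) :=
            Finset.sum_le_sum fun k _ => hu1 _ k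
          _ = m := by simp
      constructor
      · intro j
        rw [hαsrec]
        rcases le_or_gt (αs t j) (2*δ) with hle | hgt
        · have h1 : uu (αs t) j ≤ 1/(m^2:ℝ) := hkey (αs t) hαnn hsum j hle
          have hub_lb' : 1 ≤ (∑ k, uu (αs t) k) * (m:ℝ) := by
            have := hub_lb
            rwa [div_le_iff₀ hmR0] at this
          have h2 : 1/(m^2:ℝ) ≤ (∑ k, uu (αs t) k)/(m:ℝ) := by
            rw [div_le_div_iff₀ (by positivity) hmR0]
            nlinarith [hub_lb', hmR0]
          have h3 : uu (αs t) j - (∑ k, uu (αs t) k)/(m:ℝ) ≤ 0 := by linarith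
          nlinarith [hpos j, (hs'pos t).le]
        · have hub0 : 0 ≤ (∑ k, uu (αs t) k)/(m:ℝ) := div_nonneg hsumu_nn hmR0.le
          have h5 : uu (αs t) j - (∑ k, uu (αs t) k)/(m:ℝ) ≤ 1 := by
            linarith [hu1 (αs t) j]
          have h6 : s' t * (uu (αs t) j - (∑ k, uu (αs t) k)/(m:ℝ)) ≤ δ := by
            calc s' t * (uu (αs t) j - (∑ k, uu (αs t) k)/(m:ℝ)) ≤ s' t * 1 :=
                mul_le_mul_of_nonneg_left h5 (hs'pos t).le
              _ = s' t := mul_one _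
              _ ≤ δ := hs'leδ t
          linarith [hρδ]
      · have hstep1 : ∑ j, αs (t+1) j
            = ∑ j, (αs t j - s' t * (uu (αs t) j - (∑ k, uu (αs t) k)/(m:ℝ))) :=
          Finset.sum_congr rfl fun j _ => hαsrec t j
        rw [hstep1, Finset.sum_sub_distrib, hsum, ← Finset.mul_sum, Finset.sum_sub_distrib,
          Finset.sum_const, Finset.card_univ, Fintype.card_fin, nsmul_eq_mul]
        have h7 : (m:ℝ) * ((∑ k, uu (αs t) k)/(m:ℝ)) = ∑ k, uu (αs t) k := by
          rw [mul_comm, div_mul_cancel₀ _ hmR0.ne']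
        rw [h7, sub_self, mul_zero, sub_zero]
  have hαspos : ∀ t j, 0 < αs t j := fun t j => lt_of_lt_of_le hρ0 ((hinv t).1 j)
  have hαsnn : ∀ t j, (0:ℝ) ≤ αs t j := fun t j => (hαspos t j).le
  -- the infimum value
  set SS : Set ℝ := {r : ℝ | ∃ α : Fin m → ℝ, (∀ j, 0 ≤ α j) ∧ (∑ j, α j = 1) ∧
      r = ∫ x, (⨆ j, α j * f j x) ∂ν} with hSSdef
  have hSmem : ∀ α : Fin m → ℝ, (∀ j, 0 ≤ α j) → (∑ j, α j = 1) → g α ∈ SS :=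
    fun α h1 h2 => ⟨α, h1, h2, rfl⟩
  have hSne : SS.Nonempty := ⟨g α0, hSmem α0 (fun j => (hα0_pos j).le) hα0_sum⟩
  have hSbdd : BddBelow SS := by
    refine ⟨0, fun r hr => ?_⟩
    obtain ⟨α, hα0', hα1', rfl⟩ := hr
    exact integral_nonneg fun x => supf_nonneg hf_nonneg α hα0' x
  set vstar : ℝ := sInf SS with hvdef
  have hvle : ∀ t, vstar ≤ g (αs t) := fun t =>
    csInf_le hSbdd (hSmem (αs t) (hαsnn t) (hinv t).2)
  -- per-step and summed inequalities
  have hsteps : ∀ β : Fin m → ℝ, (∀ j, 0 ≤ β j) → (∑ j, β j = 1) → ∀ T,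
      2 * ∑ t ∈ Finset.range T, s' t * (g (αs t) - ∑ k, β k * uu (αs t) k)
        ≤ (∑ j, (α0 j - β j)^2) + (m:ℝ) * ∑ t ∈ Finset.range T, (s' t)^2 := by
    intro β hβ0 hβ1
    have hstep : ∀ t, (∑ j, (αs (t+1) j - β j)^2) ≤ (∑ j, (αs t j - β j)^2)
        - 2 * s' t * (g (αs t) - ∑ k, β k * uu (αs t) k) + (s' t)^2 * m := by
      intro t
      have hsum1 : ∑ j, αs t j = 1 := (hinv t).2
      have hid : ∀ j, (αs (t+1) j - β j)^2 = (αs t j - β j)^2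
          - 2 * s' t * ((uu (αs t) j - (∑ k, uu (αs t) k)/(m:ℝ)) * (αs t j - β j))
          + (s' t)^2 * (uu (αs t) j - (∑ k, uu (αs t) k)/(m:ℝ))^2 := by
        intro j
        rw [hαsrec t j]
        ring
      have hsumid : (∑ j, (αs (t+1) j - β j)^2) = (∑ j, (αs t j - β j)^2)
          - 2 * s' t * (∑ j, (uu (αs t) j - (∑ k, uu (αs t) k)/(m:ℝ)) * (αs t j - β j))
          + (s' t)^2 * (∑ j, (uu (αs t) j - (∑ k, uu (αs t) k)/(m:ℝ))^2) := by
        rw [Finset.sum_congr rfl fun j _ => hid j, Finset.sum_add_distrib,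
          Finset.sum_sub_distrib, ← Finset.mul_sum, ← Finset.mul_sum]
      have hcross : (∑ j, (uu (αs t) j - (∑ k, uu (αs t) k)/(m:ℝ)) * (αs t j - β j))
          = g (αs t) - ∑ k, β k * uu (αs t) k := by
        have h1 : ∑ j, (uu (αs t) j - (∑ k, uu (αs t) k)/(m:ℝ)) * (αs t j - β j)
            = ∑ j, uu (αs t) j * (αs t j - β j)
              - ((∑ k, uu (αs t) k)/(m:ℝ)) * ∑ j, (αs t j - β j) := by
          rw [Finset.mul_sum, ← Finset.sum_sub_distrib]
          exact Finset.sum_congr rfl fun j _ => by ring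
        have h2 : ∑ j, (αs t j - β j) = 0 := by
          rw [Finset.sum_sub_distrib, hsum1, hβ1, sub_self]
        rw [h1, h2, mul_zero, sub_zero, hgsum (αs t) (hαsnn t), ← Finset.sum_sub_distrib]
        exact Finset.sum_congr rfl fun j _ => by ring
      have hw2 : (∑ j, (uu (αs t) j - (∑ k, uu (αs t) k)/(m:ℝ))^2) ≤ (m:ℝ) := by
        have hub0 : 0 ≤ (∑ k, uu (αs t) k)/(m:ℝ) :=
          div_nonneg (Finset.sum_nonneg fun k _ => hu0 _ k) hmR0.le
        have hub1' : ∑ k, uu (αs t) k ≤ (m:ℝ) := by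
          have h := Finset.sum_le_sum (fun k (_ : k ∈ Finset.univ) => hu1 (αs t) k)
          simpa using h
        have hub1 : (∑ k, uu (αs t) k)/(m:ℝ) ≤ 1 := by
          rw [div_le_one hmR0]; exact hub1'
        have hterm : ∀ j, (uu (αs t) j - (∑ k, uu (αs t) k)/(m:ℝ))^2 ≤ 1 := by
          intro j
          nlinarith [hu0 (αs t) j, hu1 (αs t) j]
        have h := Finset.sum_le_sum (fun j (_ : j ∈ Finset.univ) => hterm j)
        simpa using h
      rw [hsumid, hcross]
      nlinarith [hw2, sq_nonneg (s' t)]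
    have hmain : ∀ T, (∑ j, (αs T j - β j)^2)
        + 2 * ∑ t ∈ Finset.range T, s' t * (g (αs t) - ∑ k, β k * uu (αs t) k)
        ≤ (∑ j, (α0 j - β j)^2) + (m:ℝ) * ∑ t ∈ Finset.range T, (s' t)^2 := by
      intro T
      induction T with
      | zero => simp [hαs0]
      | succ T ih =>
        rw [Finset.sum_range_succ, Finset.sum_range_succ, mul_add, mul_add]
        have h3 := hstep T
        have h4 : (s' T)^2 * (m:ℝ) = (m:ℝ) * (s' T)^2 := by ring
        have h5 : 2 * (s' T * (g (αs T) - ∑ k, β k * uu (αs T) k))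
            = 2 * s' T * (g (αs T) - ∑ k, β k * uu (αs T) k) := by ring
        linarith
    intro T
    have h6 := hmain T
    have h7 : 0 ≤ ∑ j, (αs T j - β j)^2 := Finset.sum_nonneg fun _ _ => sq_nonneg _
    linarith
  have hd0 : ∀ β : Fin m → ℝ, (∀ j, 0 ≤ β j) → (∑ j, β j = 1) →
      (∑ j, (α0 j - β j)^2) ≤ (m:ℝ) := by
    intro β hβ0 hβ1
    have h1 : ∀ j, (α0 j - β j)^2 ≤ 1 := by
      intro j
      have hα0le : α0 j ≤ 1 := by
        rw [← hα0_sum]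
        exact Finset.single_le_sum (fun i _ => (hα0_pos i).le) (Finset.mem_univ j)
      have hβle : β j ≤ 1 := by
        rw [← hβ1]
        exact Finset.single_le_sum (fun i _ => hβ0 i) (Finset.mem_univ j)
      nlinarith [hα0_pos j, hβ0 j]
    calc ∑ j, (α0 j - β j)^2 ≤ ∑ _j : Fin m, (1:ℝ) := Finset.sum_le_sum fun j _ => h1 j
      _ = m := by simp
  have hST : ∀ M : ℝ, ∃ T, M ≤ ∑ t ∈ Finset.range T, s' t := by
    intro M
    obtain ⟨T, hT⟩ := (tendsto_atTop.1 hs'div M).exists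
    exact ⟨T, hT⟩
  -- claim A: values get close to the infimum
  have hclaimA : ∀ ε : ℝ, 0 < ε → ∃ i, g (αs i) < vstar + ε := by
    intro ε hε
    by_contra hcon
    push_neg at hcon
    obtain ⟨r, hrS, hrlt⟩ := (csInf_lt_iff hSbdd hSne).1
      (show sInf SS < vstar + ε/2 from lt_add_of_pos_right _ (by linarith))
    obtain ⟨β, hβ0, hβ1, rfl⟩ := hrS
    have hgβlt : g β < vstar + ε/2 := hrlt
    have hper : ∀ t, ε/2 ≤ g (αs t) - ∑ k, β k * uu (αs t) k := by
      intro t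
      have h1 := hpair (αs t) β hβ0
      have h2 := hcon t
      linarith
    obtain ⟨K, hK0, hK⟩ := cesaro (fun t => (hs'pos t).le) hs'lim
      (show (0:ℝ) < ε/(2*m) by positivity)
    have hd0' : 0 ≤ ∑ j, (α0 j - β j)^2 := Finset.sum_nonneg fun _ _ => sq_nonneg _
    have hbound : ∀ T, (ε/2) * ∑ t ∈ Finset.range T, s' t
        ≤ (∑ j, (α0 j - β j)^2) + (m:ℝ)*K := by
      intro T
      have h3 := hsteps β hβ0 hβ1 T
      have h4 : ∑ t ∈ Finset.range T, s' t * (ε/2)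
          ≤ ∑ t ∈ Finset.range T, s' t * (g (αs t) - ∑ k, β k * uu (αs t) k) :=
        Finset.sum_le_sum fun t _ => mul_le_mul_of_nonneg_left (hper t) (hs'pos t).le
      have h5 : ∑ t ∈ Finset.range T, s' t * (ε/2)
          = (ε/2) * ∑ t ∈ Finset.range T, s' t := by
        rw [← Finset.sum_mul, mul_comm]
      have h6 := hK T
      have h7 : (m:ℝ) * ∑ t ∈ Finset.range T, (s' t)^2
          ≤ (m:ℝ)*K + (ε/2) * ∑ t ∈ Finset.range T, s' t := by
        calc (m:ℝ) * ∑ t ∈ Finset.range T, (s' t)^2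
            ≤ (m:ℝ) * (K + ε/(2*m) * ∑ t ∈ Finset.range T, s' t) :=
              mul_le_mul_of_nonneg_left h6 hmR0.le
          _ = (m:ℝ)*K + (ε/2) * ∑ t ∈ Finset.range T, s' t := by
              field_simp
      linarith
    obtain ⟨T, hT⟩ := hST (((∑ j, (α0 j - β j)^2) + (m:ℝ)*K + 1) * (2/ε))
    have h8 := hbound T
    have h9 : (ε/2) * (((∑ j, (α0 j - β j)^2) + (m:ℝ)*K + 1) * (2/ε))
        ≤ (ε/2) * ∑ t ∈ Finset.range T, s' t :=
      mul_le_mul_of_nonneg_left hT (by positivity)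
    have h10 : (ε/2) * (((∑ j, (α0 j - β j)^2) + (m:ℝ)*K + 1) * (2/ε))
        = (∑ j, (α0 j - β j)^2) + (m:ℝ)*K + 1 := by
      field_simp
    rw [h10] at h9
    linarith
  -- the sup value and duality
  set TT : Set ℝ := {r : ℝ | ∃ A : Fin m → Set C, (∀ i, MeasurableSet (A i)) ∧
      (∀ i j, i ≠ j → Disjoint (A i) (A j)) ∧ (⋃ i, A i) = Set.univ ∧
      r = ⨅ j, (μ j (A j)).toReal} with hTTdef
  have hTne : TT.Nonempty := by
    classical
    obtain ⟨j0⟩ := hnem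
    set A : Fin m → Set C := fun i => if i = j0 then Set.univ else (∅ : Set C) with hAdef
    refine ⟨⨅ j, (μ j (A j)).toReal, A, ?_, ?_, ?_, rfl⟩
    · intro i
      by_cases h : i = j0 <;> simp [hAdef, h]
    · intro i j hij
      by_cases hi : i = j0 <;> by_cases hj : j = j0
      · exact absurd (hi.trans hj.symm) hij
      · simp [hAdef, hi, hj]
      · simp [hAdef, hi, hj]
      · simp [hAdef, hi, hj]
    · refine Set.eq_univ_of_forall fun x => Set.mem_iUnion.2 ⟨j0, ?_⟩
      simp [hAdef]
  have hTbddA : BddAbove TT := by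
    obtain ⟨j0⟩ := hnem
    refine ⟨1, fun r hr => ?_⟩
    obtain ⟨A, hA1, _, _, rfl⟩ := hr
    refine le_trans (ciInf_le (Set.Finite.bddBelow (Set.finite_range _)) j0) ?_
    calc ((μ j0) (A j0)).toReal ≤ (1 : ENNReal).toReal :=
        ENNReal.toReal_mono ENNReal.one_ne_top prob_le_one
      _ = 1 := ENNReal.toReal_one
  have heasy : sSup TT ≤ vstar := by
    refine csSup_le hTne fun r hr => le_csInf hSne fun q hq => ?_
    obtain ⟨A, hA1, hA2, hA3, rfl⟩ := hr
    obtain ⟨β, hβ0, hβ1, rfl⟩ := hq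
    have hrle : ∀ j, (⨅ j', (μ j' (A j')).toReal) ≤ (μ j (A j)).toReal := fun j =>
      ciInf_le (Set.Finite.bddBelow (Set.finite_range _)) j
    have key : ∑ j, β j * (μ j (A j)).toReal ≤ ∫ x, (⨆ j, β j * f j x) ∂ν := by
      rw [integral_eq_sum_partition ν hA1 hA2 hA3 (supf_int hf_meas hf_nonneg hf_int β hβ0)]
      refine Finset.sum_le_sum fun j _ => ?_
      rw [hdens j _ (hA1 j)]
      calc β j * ∫ x in A j, f j x ∂ν = ∫ x in A j, β j * f j x ∂ν :=
          (integral_const_mul _ _).symm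
        _ ≤ ∫ x in A j, (⨆ k, β k * f k x) ∂ν :=
            setIntegral_mono_on (((hf_int j).const_mul _).integrableOn)
              ((supf_int hf_meas hf_nonneg hf_int β hβ0).integrableOn) (hA1 j)
              fun x _ => le_supf β j x
    calc (⨅ j', (μ j' (A j')).toReal)
        = ∑ j, β j * (⨅ j', (μ j' (A j')).toReal) := by
          rw [← Finset.sum_mul, hβ1, one_mul]
      _ ≤ ∑ j, β j * (μ j (A j)).toReal :=
          Finset.sum_le_sum fun j _ => mul_le_mul_of_nonneg_left (hrle j) (hβ0 j)
      _ ≤ ∫ x, (⨆ j, β j * f j x) ∂ν := key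
  have hdual : vstar ≤ sSup TT := by
    refine le_of_forall_pos_le_add fun ε hε => ?_
    obtain ⟨K, hK0, hK⟩ := cesaro (fun t => (hs'pos t).le) hs'lim
      (show (0:ℝ) < ε/(2*m) by positivity)
    obtain ⟨T, hT⟩ := hST (((m:ℝ) + m*K + 1) * (2/ε))
    have hST0 : 0 < ∑ t ∈ Finset.range T, s' t := by
      have h1 : 0 < ((m:ℝ) + m*K + 1) * (2/ε) := by
        have : 0 < (m:ℝ) + m*K + 1 := by nlinarith [mul_nonneg hmR0.le hK0]
        positivity
      linarith
    have h7 : (m:ℝ) + m*K + 1 ≤ (ε/2) * ∑ t ∈ Finset.range T, s' t := by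
      have h2 : (ε/2) * (((m:ℝ) + m*K + 1) * (2/ε)) ≤ (ε/2) * ∑ t ∈ Finset.range T, s' t :=
        mul_le_mul_of_nonneg_left hT (by positivity)
      have h3 : (ε/2) * (((m:ℝ) + m*K + 1) * (2/ε)) = (m:ℝ) + m*K + 1 := by
        field_simp
      linarith
    have hTbound : (m:ℝ) + (m:ℝ) * ∑ t ∈ Finset.range T, (s' t)^2
        ≤ ε * ∑ t ∈ Finset.range T, s' t := by
      have h6 := hK T
      have h8 : (m:ℝ) * ∑ t ∈ Finset.range T, (s' t)^2
          ≤ (m:ℝ)*K + (ε/2) * ∑ t ∈ Finset.range T, s' t := by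
        calc (m:ℝ) * ∑ t ∈ Finset.range T, (s' t)^2
            ≤ (m:ℝ) * (K + ε/(2*m) * ∑ t ∈ Finset.range T, s' t) :=
              mul_le_mul_of_nonneg_left h6 hmR0.le
          _ = (m:ℝ)*K + (ε/2) * ∑ t ∈ Finset.range T, s' t := by
              field_simp
      linarith
    have hcoordavg : ∀ k : Fin m, (vstar - ε/2) * ∑ t ∈ Finset.range T, s' t
        ≤ ∑ t ∈ Finset.range T, s' t * uu (αs t) k := by
      intro k
      set β : Fin m → ℝ := Pi.single k 1 with hβdef
      have hβ0 : ∀ j, 0 ≤ β j := by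
        intro j
        rw [hβdef]
        simp only [Pi.single_apply]
        split_ifs <;> norm_num
      have hβ1 : ∑ j, β j = 1 := by
        rw [hβdef]
        simp [Pi.single_apply]
      have hβu : ∀ t : ℕ, ∑ k', β k' * uu (αs t) k' = uu (αs t) k := by
        intro t
        rw [hβdef]
        simp [Pi.single_apply, ite_mul]
      have h3 := hsteps β hβ0 hβ1 T
      simp only [hβu] at h3
      have hd0m := hd0 β hβ0 hβ1
      have h10 : 2 * ∑ t ∈ Finset.range T, s' t * (g (αs t) - uu (αs t) k)
          ≤ ε * ∑ t ∈ Finset.range T, s' t := by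
        linarith
      have h11 : vstar * ∑ t ∈ Finset.range T, s' t
          ≤ ∑ t ∈ Finset.range T, s' t * g (αs t) := by
        rw [Finset.mul_sum]
        refine Finset.sum_le_sum fun t _ => ?_
        rw [mul_comm]
        exact mul_le_mul_of_nonneg_left (hvle t) (hs'pos t).le
      have h12 : ∑ t ∈ Finset.range T, s' t * uu (αs t) k
          = ∑ t ∈ Finset.range T, s' t * g (αs t)
            - ∑ t ∈ Finset.range T, s' t * (g (αs t) - uu (αs t) k) := by
        rw [← Finset.sum_sub_distrib]
        exact Finset.sum_congr rfl fun t _ => by ring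
      have h13 : (vstar - ε/2) * ∑ t ∈ Finset.range T, s' t
          = vstar * ∑ t ∈ Finset.range T, s' t
            - (ε * ∑ t ∈ Finset.range T, s' t)/2 := by ring
      rw [h12, h13]
      linarith
    -- mixing
    have hppos : ∀ t : Fin T, 0 ≤ s' (t:ℕ) / ∑ t ∈ Finset.range T, s' t :=
      fun t => div_nonneg (hs'pos _).le hST0.le
    have hpsum : ∑ t : Fin T, s' (t:ℕ) / ∑ t' ∈ Finset.range T, s' t' = 1 := by
      rw [← Finset.sum_div]
      rw [Fin.sum_univ_eq_sum_range (fun t => s' t) T]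
      rw [div_self hST0.ne']
    obtain ⟨A, hA1, hA2, hA3, hA4⟩ := mix_partitions hf_meas hf_nonneg hf_int hsplitI T
      (fun t => part f (αs (t:ℕ))) (fun t j => part_meas hf_meas _ j)
      (fun t => part_disjoint _) (fun t => part_cover _)
      (fun t => s' (t:ℕ) / ∑ t' ∈ Finset.range T, s' t') hppos hpsum (half_pos hε)
    have hAval : ∀ j, vstar - ε ≤ ∫ x in A j, f j x ∂ν := by
      intro j
      have h13 := hA4 j
      have h14 : ∑ t : Fin T, (s' (t:ℕ) / ∑ t' ∈ Finset.range T, s' t')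
            * ∫ x in part f (αs (t:ℕ)) j, f j x ∂ν
          = (∑ t ∈ Finset.range T, s' t * uu (αs t) j) / ∑ t' ∈ Finset.range T, s' t' := by
        rw [Finset.sum_div]
        rw [← Fin.sum_univ_eq_sum_range
          (fun t => s' t * uu (αs t) j / ∑ t' ∈ Finset.range T, s' t') T]
        refine Finset.sum_congr rfl fun t _ => ?_
        rw [div_mul_eq_mul_div]
        rfl
      have h15 : vstar - ε/2
          ≤ (∑ t ∈ Finset.range T, s' t * uu (αs t) j) / ∑ t' ∈ Finset.range T, s' t' := by
        rw [le_div_iff₀ hST0]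
        exact hcoordavg j
      rw [h14] at h13
      linarith
    have hrT : (⨅ j, (μ j (A j)).toReal) ∈ TT :=
      ⟨A, hA1, fun i j hij => hA2 hij, hA3, rfl⟩
    have hrge : vstar - ε ≤ ⨅ j, (μ j (A j)).toReal := by
      refine le_ciInf fun j => ?_
      rw [hdens j _ (hA1 j)]
      exact hAval j
    have hsup := le_csSup hTbddA hrT
    linarith
  -- the tendsto statement
  have htendsto : Tendsto (fun t => ⨅ i : Fin (t + 1), g (αs i)) atTop (𝓝 vstar) := by
    set M : ℕ → ℝ := fun t => ⨅ i : Fin (t + 1), g (αs i) with hMdef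
    have hMge : ∀ t, vstar ≤ M t := by
      intro t
      exact le_ciInf fun i => hvle i
    have hMle : ∀ t, M t ≤ g (αs t) := by
      intro t
      exact ciInf_le (Set.Finite.bddBelow (Set.finite_range _)) (⟨t, Nat.lt_succ_self t⟩ : Fin (t+1))
    have hManti : Antitone M := by
      intro a b hab
      refine le_ciInf fun i => ?_
      exact ciInf_le (Set.Finite.bddBelow (Set.finite_range _))
        (⟨(i : ℕ), by omega⟩ : Fin (b+1))
    have hMbdd : BddBelow (Set.range M) := by
      refine ⟨vstar, fun x hx => ?_⟩
      obtain ⟨t, rfl⟩ := hx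
      exact hMge t
    have h := tendsto_atTop_ciInf hManti hMbdd
    have heq : (⨅ t, M t) = vstar := by
      refine le_antisymm ?_ (le_ciInf fun t => hMge t)
      refine le_of_forall_pos_le_add fun ε hε => ?_
      obtain ⟨i, hi⟩ := hclaimA ε hε
      calc (⨅ t, M t) ≤ M i := ciInf_le hMbdd i
        _ ≤ g (αs i) := hMle i
        _ ≤ vstar + ε := hi.le
    rwa [heq] at h
  -- assemble
  refine ⟨s', αs, fun t => uu (αs t), fun t => ⟨hs'pos t, hs'le t⟩, hs'lim, hs'div, hαs0,
    fun t => ⟨fun j => hαspos t j, (hinv t).2⟩, ?_, fun t i => rfl, htendsto, ?_⟩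
  · intro t
    refine ⟨part f (αs t), fun i => part_meas hf_meas (αs t) i,
      fun i j hij => part_disjoint (αs t) hij, part_cover (αs t), ?_, ?_⟩
    · intro k
      exact Filter.Eventually.of_forall fun x hx h => part_spec (αs t) k hx h
    · funext j
      exact (hdens j _ (part_meas hf_meas (αs t) j)).symm
  · exact le_antisymm hdual heasy
end

section
/- Assume each μ_j is a nonatomic finite measure on C. Then the partition range P := {(μ_1(A_1), …, μ_m(A_m)) ∈ ℝ^m : (A_1, …, A_m) is an m-partition of C} is a convex and compact subset of ℝ^m. -/
open MeasureTheory Filter Topology Set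

namespace DWW

variable {C : Type} [MeasurableSpace C]

noncomputable instance {ν : Measure C} :
    LocallyConvexSpace ℝ (WeakDual ℝ (Lp ℝ 2 ν)) := WeakBilin.locallyConvexSpace

/-- Splitting a set of positive measure into three disjoint pieces of positive measure. -/
lemma split3 (ν : Measure C)
    (hsp : ∀ A : Set C, MeasurableSet A → 0 < ν A →
      ∃ B, MeasurableSet B ∧ B ⊆ A ∧ 0 < ν B ∧ 0 < ν (A \ B))
    {A : Set C} (hA : MeasurableSet A) (hpos : 0 < ν A) :
    ∃ B : Fin 3 → Set C, (∀ i, MeasurableSet (B i)) ∧ (∀ i, B i ⊆ A) ∧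
      (∀ i j, i ≠ j → Disjoint (B i) (B j)) ∧ (∀ i, 0 < ν (B i)) := by
  obtain ⟨B0, hB0m, hB0s, hB0pos, hrest⟩ := hsp A hA hpos
  obtain ⟨B1, hB1m, hB1s, hB1pos, hrest2⟩ := hsp (A \ B0) (hA.diff hB0m) hrest
  have d01' : Disjoint B0 B1 :=
    (disjoint_sdiff_self_right (x := B0) (y := A)).mono_right hB1s
  have d02 : Disjoint B0 ((A \ B0) \ B1) :=
    (disjoint_sdiff_self_right (x := B0) (y := A)).mono_right diff_subset
  have d12 : Disjoint B1 ((A \ B0) \ B1) :=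
    disjoint_sdiff_self_right (x := B1) (y := A \ B0)
  refine ⟨![B0, B1, (A \ B0) \ B1], ?_, ?_, ?_, ?_⟩
  · intro i; fin_cases i
    · exact hB0m
    · exact hB1m
    · exact (hA.diff hB0m).diff hB1m
  · intro i; fin_cases i
    · exact hB0s
    · exact hB1s.trans diff_subset
    · exact diff_subset.trans diff_subset
  · intro i j hij
    fin_cases i <;> fin_cases j <;>
      first
      | exact absurd rfl hij
      | exact d01'
      | exact d02
      | exact d12
      | exact d01'.symm
      | exact d02.symm
      | exact d12.symm
  · intro i; fin_cases i
    · exact hB0pos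
    · exact hB1pos
    · exact hrest2

/-- Coercion of a finite sum in `Lp`. -/
lemma coeFn_sum_ae {ι : Type*} {ν : Measure C} (s : Finset ι) (f : ι → Lp ℝ 2 ν) :
    ⇑(∑ i ∈ s, f i) =ᵐ[ν] fun x => ∑ i ∈ s, ⇑(f i) x := by
  classical
  induction s using Finset.induction_on with
  | empty => simp only [Finset.sum_empty]; exact Lp.coeFn_zero ℝ 2 ν
  | @insert a s ha ih =>
    rw [Finset.sum_insert ha]
    filter_upwards [Lp.coeFn_add (f a) (∑ i ∈ s, f i), ih] with x hx hx2
    simp only [hx, Pi.add_apply, hx2, Finset.sum_insert ha]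

variable {ν : Measure C} [IsFiniteMeasure ν]

lemma inner_nonneg_of_ae (u h : Lp ℝ 2 ν) (hu : 0 ≤ᵐ[ν] ⇑u) (hh : 0 ≤ᵐ[ν] ⇑h) :
    0 ≤ (inner ℝ u h : ℝ) := by
  rw [L2.inner_def]
  apply integral_nonneg_of_ae
  filter_upwards [hu, hh] with x h1 h2
  simpa [RCLike.inner_apply] using mul_nonneg h2 h1

lemma ae_nonneg_of_inner_indicator (u : Lp ℝ 2 ν)
    (h : ∀ S : Set C, ∀ hS : MeasurableSet S,
      0 ≤ (inner ℝ (indicatorConstLp 2 hS (measure_ne_top ν S) (1:ℝ)) u : ℝ)) :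
    0 ≤ᵐ[ν] ⇑u := by
  apply ae_nonneg_of_forall_setIntegral_nonneg ((Lp.memLp u).integrable one_le_two)
  intro S hS _
  rw [← L2.inner_indicatorConstLp_one hS (measure_ne_top ν S) u]
  exact h S hS

lemma bridge (μj : Measure C) [IsFiniteMeasure μj] (hle : μj ≤ ν)
    (Gj : Lp ℝ 2 ν) (hG : ⇑Gj =ᵐ[ν] fun x => (μj.rnDeriv ν x).toReal)
    {S : Set C} (hS : MeasurableSet S) :
    (inner ℝ (indicatorConstLp 2 hS (measure_ne_top ν S) (1:ℝ)) Gj : ℝ) = (μj S).toReal := by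
  rw [L2.inner_indicatorConstLp_one hS (measure_ne_top ν S) Gj]
  rw [setIntegral_congr_ae hS (hG.mono fun x hx _ => hx)]
  rw [integral_toReal ((Measure.measurable_rnDeriv μj ν).aemeasurable)
    (ae_restrict_of_ae (Measure.rnDeriv_lt_top μj ν))]
  rw [Measure.setLIntegral_rnDeriv (Measure.absolutelyContinuous_of_le hle) S]

/-- membership in Lp of the Radon-Nikodym density -/
lemma memG (μj : Measure C) [IsFiniteMeasure μj] (hle : μj ≤ ν) :
    MemLp (fun x => (μj.rnDeriv ν x).toReal) 2 ν := by
  refine MemLp.of_bound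
    ((Measure.measurable_rnDeriv μj ν).ennreal_toReal.aestronglyMeasurable) 1 ?_
  filter_upwards [Measure.rnDeriv_le_one_of_le hle] with x hx
  rw [Real.norm_eq_abs, abs_of_nonneg ENNReal.toReal_nonneg]
  calc (μj.rnDeriv ν x).toReal ≤ (1 : ENNReal).toReal :=
        ENNReal.toReal_mono ENNReal.one_ne_top hx
    _ = 1 := by simp

end DWW
set_option maxHeartbeats 2000000 in
set_option synthInstance.maxHeartbeats 1000000 in
/-- For nonatomic finite measures, the partition range
`P = {(μ 1 (A 1), …, μ m (A m)) : A an m-partition of C}` is convex and compact. -/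
theorem partition_range_convex_compact
    {C : Type} [MeasurableSpace C] {m : ℕ}
    (μ : Fin m → Measure C) [∀ j, IsFiniteMeasure (μ j)]
    (hna : ∀ j (A : Set C), MeasurableSet A → 0 < μ j A →
      ∃ B, MeasurableSet B ∧ B ⊆ A ∧ 0 < μ j B ∧ 0 < μ j (A \ B)) :
    Convex ℝ {p : Fin m → ℝ | ∃ A : Fin m → Set C,
        (∀ i, MeasurableSet (A i)) ∧
        (∀ i j, i ≠ j → Disjoint (A i) (A j)) ∧
        (⋃ i, A i) = Set.univ ∧
        p = fun j => (μ j (A j)).toReal} ∧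
    IsCompact {p : Fin m → ℝ | ∃ A : Fin m → Set C,
        (∀ i, MeasurableSet (A i)) ∧
        (∀ i j, i ≠ j → Disjoint (A i) (A j)) ∧
        (⋃ i, A i) = Set.univ ∧
        p = fun j => (μ j (A j)).toReal} := by
  classical
  rcases Nat.eq_zero_or_pos m with hm0 | hm
  · -- degenerate case `m = 0`
    subst hm0
    have hsub : ({p : Fin 0 → ℝ | ∃ A : Fin 0 → Set C,
        (∀ i, MeasurableSet (A i)) ∧
        (∀ i j, i ≠ j → Disjoint (A i) (A j)) ∧
        (⋃ i, A i) = Set.univ ∧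
        p = fun j => (μ j (A j)).toReal} : Set (Fin 0 → ℝ)).Subsingleton :=
      fun p _ q _ => Subsingleton.elim p q
    exact ⟨hsub.convex, hsub.finite.isCompact⟩
  -- setup
  set ν : Measure C := ∑ j, μ j with hνdef
  haveI hνfin : IsFiniteMeasure ν := by rw [hνdef]; infer_instance
  have hle' : ∀ j (s : Set C), μ j s ≤ ν s := by
    intro j s
    rw [hνdef, MeasureTheory.Measure.finset_sum_apply]
    exact Finset.single_le_sum (f := fun i => μ i s) (fun _ _ => zero_le) (Finset.mem_univ j)
  have hle : ∀ j, μ j ≤ ν := fun j => MeasureTheory.Measure.le_iff'.2 (hle' j)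
  have hac : ∀ j, μ j ≪ ν := fun j => Measure.absolutelyContinuous_of_le (hle j)
  -- ν splits positive sets
  have hsp : ∀ A : Set C, MeasurableSet A → 0 < ν A →
      ∃ B, MeasurableSet B ∧ B ⊆ A ∧ 0 < ν B ∧ 0 < ν (A \ B) := by
    intro A hA hpos
    have hex : ∃ j, 0 < μ j A := by
      by_contra h
      push_neg at h
      have : ν A = 0 := by
        rw [hνdef, MeasureTheory.Measure.finset_sum_apply]
        exact Finset.sum_eq_zero fun j _ => le_antisymm (h j) zero_le
      exact absurd this hpos.ne'
    obtain ⟨j, hj⟩ := hex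
    obtain ⟨B, hBm, hBs, h1, h2⟩ := hna j A hA hj
    exact ⟨B, hBm, hBs, h1.trans_le (hle' j B), h2.trans_le (hle' j (A \ B))⟩
  -- the Hilbert space `L²(ν)` and distinguished elements
  set oneH : Lp ℝ 2 ν := (memLp_const (1:ℝ)).toLp _ with honeH
  have honefn : ⇑oneH =ᵐ[ν] fun _ => (1:ℝ) := MemLp.coeFn_toLp _
  set G : Fin m → Lp ℝ 2 ν := fun j => (DWW.memG (μ j) (hle j)).toLp _ with hGdef
  have hGfn : ∀ j, ⇑(G j) =ᵐ[ν] fun x => ((μ j).rnDeriv ν x).toReal :=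
    fun j => MemLp.coeFn_toLp _
  have hbridge : ∀ j (S : Set C) (hS : MeasurableSet S),
      (inner ℝ (indicatorConstLp 2 hS (measure_ne_top ν S) (1:ℝ)) (G j) : ℝ)
        = (μ j S).toReal := fun j S hS => DWW.bridge (μ j) (hle j) (G j) (hGfn j) hS
  -- the extraction of an L² function from a weak-dual element
  set Fn : WeakDual ℝ (Lp ℝ 2 ν) → Lp ℝ 2 ν :=
    fun w => (InnerProductSpace.toDual ℝ (Lp ℝ 2 ν)).symm (WeakDual.toStrongDual w) with hFndef
  have hFn : ∀ (w : WeakDual ℝ (Lp ℝ 2 ν)) (g : Lp ℝ 2 ν), (inner ℝ (Fn w) g : ℝ) = w g :=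
    fun w g => InnerProductSpace.toDual_symm_apply
  -- the fuzzy partition set
  set KD : Set (Fin m → WeakDual ℝ (Lp ℝ 2 ν)) :=
    {φ | (∀ j (g : Lp ℝ 2 ν), 0 ≤ᵐ[ν] ⇑g → 0 ≤ φ j g) ∧
      (∀ g : Lp ℝ 2 ν, (∑ j, φ j g) = (inner ℝ oneH g : ℝ))} with hKDdef
  -- basic facts about members of KD
  have hK0 : ∀ φ ∈ KD, ∀ j, 0 ≤ᵐ[ν] ⇑(Fn (φ j)) := by
    intro φ hφ j
    apply DWW.ae_nonneg_of_inner_indicator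
    intro S hS
    rw [real_inner_comm, hFn]
    apply hφ.1 j
    filter_upwards [indicatorConstLp_coeFn (p := 2) (hs := hS)
      (hμs := measure_ne_top ν S) (c := (1:ℝ))] with x hx
    rw [hx]
    exact Set.indicator_nonneg (fun _ _ => zero_le_one) x
  have hKsum : ∀ φ ∈ KD, (∑ j, Fn (φ j)) = oneH := by
    intro φ hφ
    apply ext_inner_right ℝ
    intro v
    rw [sum_inner]
    simp_rw [hFn]
    exact hφ.2 v
  have hKsum_ae : ∀ φ ∈ KD, (fun x => ∑ j, ⇑(Fn (φ j)) x) =ᵐ[ν] fun _ => (1:ℝ) := by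
    intro φ hφ
    have h1 := DWW.coeFn_sum_ae (Finset.univ) (fun j => Fn (φ j))
    rw [hKsum φ hφ] at h1
    exact h1.symm.trans honefn
  have hKle1 : ∀ φ ∈ KD, ∀ j, ∀ᵐ x ∂ν, ⇑(Fn (φ j)) x ≤ 1 := by
    intro φ hφ j
    filter_upwards [hKsum_ae φ hφ, MeasureTheory.ae_all_iff.2 (hK0 φ hφ)] with x hx hx2
    calc ⇑(Fn (φ j)) x ≤ ∑ i, ⇑(Fn (φ i)) x :=
          Finset.single_le_sum (f := fun i => ⇑(Fn (φ i)) x) (fun i _ => hx2 i)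
            (Finset.mem_univ j)
      _ = 1 := hx
  -- norm bound on members of KD
  have hFnnorm : ∀ w : WeakDual ℝ (Lp ℝ 2 ν), ‖Fn w‖ = ‖WeakDual.toStrongDual w‖ :=
    fun w => LinearIsometryEquiv.norm_map (InnerProductSpace.toDual ℝ (Lp ℝ 2 ν)).symm _
  have hball : KD ⊆ Set.pi Set.univ
      (fun _ : Fin m => WeakDual.toStrongDual ⁻¹' Metric.closedBall 0 ‖oneH‖) := by
    intro φ hφ j _
    simp only [Set.mem_preimage, Metric.mem_closedBall, dist_zero_right]
    rw [← hFnnorm (φ j)]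
    rw [MeasureTheory.Lp.norm_def, MeasureTheory.Lp.norm_def]
    apply ENNReal.toReal_mono (MeasureTheory.Lp.eLpNorm_ne_top oneH)
    apply eLpNorm_mono_ae
    filter_upwards [hK0 φ hφ j, hKle1 φ hφ j, honefn] with x h0 h1 hone
    rw [hone, Real.norm_eq_abs, Real.norm_eq_abs, abs_of_nonneg h0, abs_one]
    exact h1
  -- closedness of KD
  have hKDclosed : IsClosed KD := by
    have hrw : KD = (⋂ j, ⋂ g : Lp ℝ 2 ν, ⋂ (_ : 0 ≤ᵐ[ν] ⇑g), {φ : Fin m → WeakDual ℝ (Lp ℝ 2 ν) | 0 ≤ φ j g}) ∩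
        ⋂ g : Lp ℝ 2 ν, {φ : Fin m → WeakDual ℝ (Lp ℝ 2 ν) | (∑ j, φ j g) = (inner ℝ oneH g : ℝ)} := by
      ext φ
      simp only [hKDdef, Set.mem_setOf_eq, Set.mem_inter_iff, Set.mem_iInter]
    rw [hrw]
    refine IsClosed.inter ?_ ?_
    · refine isClosed_iInter fun j => isClosed_iInter fun g => isClosed_iInter fun _ => ?_
      exact isClosed_le continuous_const ((WeakDual.eval_continuous g).comp (continuous_apply j))
    · refine isClosed_iInter fun g => ?_
      exact isClosed_eq
        (continuous_finset_sum _ fun j _ => (WeakDual.eval_continuous g).comp (continuous_apply j))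
        continuous_const
  have hKDcompact : IsCompact KD :=
    IsCompact.of_isClosed_subset
      (isCompact_univ_pi fun _ => WeakDual.isCompact_closedBall (𝕜 := ℝ) 0 ‖oneH‖)
      hKDclosed hball
  -- convexity of KD
  have hKDconvex : Convex ℝ KD := by
    intro φ hφ ψ hψ a b ha hb hab
    constructor
    · intro j g hg
      have : (a • φ + b • ψ) j g = a * φ j g + b * ψ j g := rfl
      rw [this]
      exact add_nonneg (mul_nonneg ha (hφ.1 j g hg)) (mul_nonneg hb (hψ.1 j g hg))
    · intro g
      have hap : ∀ j, (a • φ + b • ψ) j g = a * φ j g + b * ψ j g := fun j => rfl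
      simp_rw [hap]
      rw [Finset.sum_add_distrib, ← Finset.mul_sum, ← Finset.mul_sum, hφ.2 g, hψ.2 g]
      rw [← add_mul, hab, one_mul]
  -- the evaluation map Φ
  set Φ : (Fin m → WeakDual ℝ (Lp ℝ 2 ν)) → (Fin m → ℝ) := fun φ j => φ j (G j) with hΦdef
  have hΦcont : Continuous Φ :=
    continuous_pi fun j => (WeakDual.eval_continuous (G j)).comp (continuous_apply j)
  -- the partition range
  set Pset : Set (Fin m → ℝ) := {p : Fin m → ℝ | ∃ A : Fin m → Set C,
      (∀ i, MeasurableSet (A i)) ∧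
      (∀ i j, i ≠ j → Disjoint (A i) (A j)) ∧
      (⋃ i, A i) = Set.univ ∧
      p = fun j => (μ j (A j)).toReal} with hPdef
  -- partitions give members of KD
  have hPsub : Pset ⊆ Φ '' KD := by
    rintro p ⟨A, hAm, hAdis, hAun, rfl⟩
    set I : Fin m → Lp ℝ 2 ν := fun j =>
      indicatorConstLp 2 (hAm j) (measure_ne_top ν (A j)) (1:ℝ) with hIdef
    set φ : Fin m → WeakDual ℝ (Lp ℝ 2 ν) := fun j =>
      StrongDual.toWeakDual (InnerProductSpace.toDual ℝ (Lp ℝ 2 ν) (I j)) with hφdef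
    have hφapp : ∀ j g, φ j g = (inner ℝ (I j) g : ℝ) := fun j g => InnerProductSpace.toDual_apply_apply
    have hIfn : ∀ᵐ x ∂ν, ∀ j, ⇑(I j) x = (A j).indicator (fun _ => (1:ℝ)) x :=
      MeasureTheory.ae_all_iff.2 fun j => indicatorConstLp_coeFn
    have hsumind : (∑ j, I j) = oneH := by
      apply MeasureTheory.Lp.ext
      refine (DWW.coeFn_sum_ae Finset.univ I).trans (?_ : _ =ᵐ[ν] _) |>.trans honefn.symm
      filter_upwards [hIfn] with x hx
      obtain ⟨j0, hj0⟩ : ∃ j0, x ∈ A j0 := by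
        have hx' : x ∈ ⋃ i, A i := hAun ▸ Set.mem_univ x
        simpa [Set.mem_iUnion] using hx'
      rw [Finset.sum_eq_single j0]
      · rw [hx j0, Set.indicator_of_mem hj0]
      · intro i _ hi
        rw [hx i, Set.indicator_of_notMem]
        exact fun hxi => (Set.disjoint_left.1 (hAdis i j0 hi)) hxi hj0
      · exact fun h => absurd (Finset.mem_univ j0) h
    refine ⟨φ, ⟨?_, ?_⟩, ?_⟩
    · intro j g hg
      rw [hφapp]
      refine DWW.inner_nonneg_of_ae _ _ ?_ hg
      filter_upwards [hIfn] with x hx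
      rw [hx j]
      exact Set.indicator_nonneg (fun _ _ => zero_le_one) x
    · intro g
      simp_rw [hφapp]
      rw [← sum_inner, hsumind]
    · show Φ φ = _
      funext j
      show φ j (G j) = (μ j (A j)).toReal
      rw [hφapp]
      exact hbridge j (A j) (hAm j)
  -- members of KD give partitions (via extreme points)
  have hsub2 : Φ '' KD ⊆ Pset := by
    rintro p ⟨φ0, hφ0, rfl⟩
    -- the fiber over `Φ φ0` has an extreme point
    set F : Set (Fin m → WeakDual ℝ (Lp ℝ 2 ν)) := KD ∩ Φ ⁻¹' {Φ φ0} with hFdef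
    have hFcomp : IsCompact F := hKDcompact.inter_right (isClosed_singleton.preimage hΦcont)
    have hFne : F.Nonempty := ⟨φ0, hφ0, rfl⟩
    obtain ⟨ψ, hψmem⟩ := hFcomp.extremePoints_nonempty hFne
    rw [mem_extremePoints] at hψmem
    obtain ⟨hψF, hψext⟩ := hψmem
    have hψKD : ψ ∈ KD := hψF.1
    have hψΦ : Φ ψ = Φ φ0 := hψF.2
    -- purity of the extreme point
    have hpure : ∀ j, ∀ᵐ x ∂ν, ⇑(Fn (ψ j)) x = 0 ∨ ⇑(Fn (ψ j)) x = 1 := by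
      by_contra hcon
      push_neg at hcon
      obtain ⟨jj, hjj⟩ := hcon
      set f : Fin m → C → ℝ := fun i => ⇑(Fn (ψ i)) with hfdef
      have hfm : ∀ i, Measurable (f i) :=
        fun i => (MeasureTheory.Lp.stronglyMeasurable (Fn (ψ i))).measurable
      -- the bad set has positive measure
      set N : Set C := {x | ¬(f jj x = 0 ∨ f jj x = 1)} with hNdef
      have hNm : MeasurableSet N := by
        have : N = ((f jj ⁻¹' {0}) ∪ (f jj ⁻¹' {1}))ᶜ := by
          ext x; simp [hNdef, not_or]
        rw [this]
        exact (((hfm jj) (measurableSet_singleton 0)).union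
          ((hfm jj) (measurableSet_singleton 1))).compl
      have hNpos : 0 < ν N := by
        rw [pos_iff_ne_zero]
        intro h0
        refine hjj (ae_iff.2 ?_)
        convert h0 using 2
        ext x
        simp [hNdef, hfdef, not_or]
      -- the good set
      set E0 : Set C := ({x | (∑ i, f i x) = 1} : Set C) ∩ (⋂ i, ({x | 0 ≤ f i x} : Set C)) with hE0def
      have hE0m : MeasurableSet E0 :=
        (measurableSet_eq_fun (by exact Finset.measurable_sum _ fun i _ => hfm i)
          measurable_const).inter
          (MeasurableSet.iInter fun i => measurableSet_le measurable_const (hfm i))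
      have hE0ae : ∀ᵐ x ∂ν, x ∈ E0 := by
        filter_upwards [hKsum_ae ψ hψKD, MeasureTheory.ae_all_iff.2 (hK0 ψ hψKD)] with x h1 h2
        exact ⟨h1, Set.mem_iInter.2 fun i => h2 i⟩
      have hNE0pos : 0 < ν (N ∩ E0) := by
        have : ((N ∩ E0 : Set C) : Set C) =ᵐ[ν] (N : Set C) := by
          rw [Filter.eventuallyEq_set]
          filter_upwards [hE0ae] with x hx
          exact ⟨fun h => h.1, fun h => ⟨h, hx⟩⟩
        rwa [measure_congr this]
      -- pick the level n
      set Un : ℕ → Set C := fun n =>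
        ({x | 1/((n:ℝ)+1) ≤ f jj x ∧ f jj x ≤ 1 - 1/((n:ℝ)+1)}) ∩ (N ∩ E0) with hUndef
      have hUnm : ∀ n, MeasurableSet (Un n) := fun n =>
        (((measurableSet_le measurable_const (hfm jj))).inter
          ((measurableSet_le (hfm jj) measurable_const))).inter (hNm.inter hE0m)
      have hcover : N ∩ E0 ⊆ ⋃ n, Un n := by
        rintro x ⟨hxN, hxE⟩
        have hv0 : 0 ≤ f jj x := Set.mem_iInter.1 hxE.2 jj
        have hv1 : f jj x ≤ 1 := by
          rw [← hxE.1]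
          exact Finset.single_le_sum (f := fun i => f i x)
            (fun i _ => Set.mem_iInter.1 hxE.2 i) (Finset.mem_univ jj)
        have hne : ¬(f jj x = 0 ∨ f jj x = 1) := hxN
        push_neg at hne
        have hv0' : 0 < f jj x := lt_of_le_of_ne hv0 (Ne.symm hne.1)
        have hv1' : f jj x < 1 := lt_of_le_of_ne hv1 hne.2
        obtain ⟨n, hn⟩ := exists_nat_one_div_lt (lt_min hv0' (by linarith : (0:ℝ) < 1 - f jj x))
        refine Set.mem_iUnion.2 ⟨n, ⟨?_, ?_⟩, hxN, hxE⟩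
        · exact (hn.trans_le (min_le_left _ _)).le
        · have := hn.trans_le (min_le_right _ _)
          linarith
      obtain ⟨n, hSnpos⟩ : ∃ n, 0 < ν (Un n) := by
        by_contra hco
        push_neg at hco
        have hnull : ν (⋃ n, Un n) = 0 :=
          measure_iUnion_null fun n => by
            have := hco n; rwa [le_zero_iff] at this
        exact absurd (measure_mono_null hcover hnull) hNE0pos.ne'
      set Sn : Set C := Un n with hSndef
      have hSnm : MeasurableSet Sn := hUnm n
      -- the threshold
      set ε' : ℝ := 1 / (((n:ℝ)+1) * (m:ℝ)) with hε'def
      have hmR : (1:ℝ) ≤ (m:ℝ) := by exact_mod_cast hm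
      have hn1 : (0:ℝ) < (n:ℝ)+1 := by positivity
      have hε'pos : 0 < ε' := by rw [hε'def]; positivity
      have hε'le : ε' ≤ 1/((n:ℝ)+1) := by
        rw [hε'def]
        apply one_div_le_one_div_of_le hn1
        nlinarith
      have hkey : ((m:ℝ) - 1) * ε' < 1/((n:ℝ)+1) := by
        rw [hε'def, mul_one_div, div_lt_div_iff₀ (by positivity) hn1]
        nlinarith
      -- find the second coordinate k
      obtain ⟨k, hkne, hApos⟩ : ∃ kk : Fin m, kk ≠ jj ∧ 0 < ν (Sn ∩ {x | ε' ≤ f kk x}) := by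
        by_contra hco
        push_neg at hco
        have hnull : ν (⋃ (kk : Fin m), ⋃ (_ : kk ≠ jj), (Sn ∩ {x | ε' ≤ f kk x})) = 0 :=
          measure_iUnion_null fun kk => measure_iUnion_null fun hkk => by
            have := hco kk hkk; rwa [le_zero_iff] at this
        have hsub : Sn ⊆ ⋃ (kk : Fin m), ⋃ (_ : kk ≠ jj), (Sn ∩ {x | ε' ≤ f kk x}) := by
          intro x hx
          obtain ⟨⟨hl, hu⟩, hxN, hxE⟩ := id hx
          have hex : ∃ kk, kk ≠ jj ∧ ε' ≤ f kk x := by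
            by_contra hnone
            push_neg at hnone
            have hsplit : f jj x + ∑ l ∈ Finset.univ.erase jj, f l x = 1 := by
              rw [Finset.add_sum_erase _ (fun l => f l x) (Finset.mem_univ jj)]
              exact hxE.1
            have hbound : ∑ l ∈ Finset.univ.erase jj, f l x
                ≤ (Finset.univ.erase jj).card • ε' :=
              Finset.sum_le_card_nsmul _ _ _
                (fun l hl => (hnone l (Finset.ne_of_mem_erase hl)).le)
            have hcard : (Finset.univ.erase jj).card = m - 1 := by
              rw [Finset.card_erase_of_mem (Finset.mem_univ jj), Finset.card_univ,
                Fintype.card_fin]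
            rw [hcard, nsmul_eq_mul, Nat.cast_sub hm, Nat.cast_one] at hbound
            have h1n : 1/((n:ℝ)+1) ≤ ∑ l ∈ Finset.univ.erase jj, f l x := by linarith
            linarith
          obtain ⟨kk, hkk, hkk2⟩ := hex
          exact Set.mem_iUnion.2 ⟨kk, Set.mem_iUnion.2 ⟨hkk, hx, hkk2⟩⟩
        exact absurd (measure_mono_null hsub hnull) hSnpos.ne'
      set A : Set C := Sn ∩ {x | ε' ≤ f k x} with hAdef
      have hAm : MeasurableSet A := hSnm.inter (measurableSet_le measurable_const (hfm k))
      -- split A into three pieces of positive measure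
      obtain ⟨B, hBm, hBsub, hBdisj, hBpos⟩ := DWW.split3 ν hsp hAm hApos
      -- a nonzero kernel vector for the two moment constraints
      set L : (Fin 3 → ℝ) →ₗ[ℝ] (Fin 2 → ℝ) :=
        { toFun := fun c => ![∑ i, c i * (μ jj (B i)).toReal, ∑ i, c i * (μ k (B i)).toReal]
          map_add' := by
            intro x y
            funext r
            fin_cases r <;>
              simp [add_mul, Finset.sum_add_distrib]
          map_smul' := by
            intro a x
            funext r
            fin_cases r <;>
              simp [Finset.mul_sum, mul_assoc] } with hLdef
      have hLni : ¬ Function.Injective L := by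
        intro hinj
        have h3 := LinearMap.finrank_le_finrank_of_injective hinj
        rw [Module.finrank_fin_fun, Module.finrank_fin_fun] at h3
        norm_num at h3
      obtain ⟨c1, c2, hc12, hcne⟩ := Function.not_injective_iff.1 hLni
      set c : Fin 3 → ℝ := c1 - c2 with hcdef
      have hLc : L c = 0 := by rw [hcdef, map_sub, hc12, sub_self]
      have hc0 : c ≠ 0 := sub_ne_zero.2 hcne
      -- normalize it
      have hne3 : (Finset.univ : Finset (Fin 3)).Nonempty := ⟨0, Finset.mem_univ 0⟩
      set M3 : ℝ := Finset.univ.sup' hne3 (fun i => |c i|) with hM3def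
      obtain ⟨i0, -, hi0⟩ := Finset.exists_mem_eq_sup' hne3 (fun i => |c i|)
      have hcle : ∀ i, |c i| ≤ M3 := by
        intro i
        rw [hM3def]
        exact Finset.le_sup' (fun i => |c i|) (Finset.mem_univ i)
      have hM3pos : 0 < M3 := by
        obtain ⟨i, hi⟩ := Function.ne_iff.1 hc0
        calc (0:ℝ) < |c i| := abs_pos.2 hi
          _ ≤ M3 := hcle i
      set d : Fin 3 → ℝ := fun i => (ε' / M3) * c i with hddef
      have hdbound : ∀ i, |d i| ≤ ε' := by
        intro i
        have habs : |d i| = ε'/M3 * |c i| := by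
          simp only [hddef]
          rw [abs_mul, abs_of_nonneg (by positivity : (0:ℝ) ≤ ε' / M3)]
        rw [habs]
        calc ε'/M3 * |c i| ≤ ε'/M3 * M3 :=
              mul_le_mul_of_nonneg_left (hcle i) (by positivity)
          _ = ε' := div_mul_cancel₀ _ hM3pos.ne'
      have hdi0 : d i0 ≠ 0 := by
        simp only [hddef]
        exact mul_ne_zero (by positivity) (abs_pos.1 (hi0 ▸ hM3pos))
      have hdrel : ∀ (l : Fin m), l = jj ∨ l = k →
          ∑ i, d i * (μ l (B i)).toReal = 0 := by
        intro l hl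
        have hconv : ∑ i, d i * (μ l (B i)).toReal
            = (ε' / M3) * ∑ i, c i * (μ l (B i)).toReal := by
          rw [Finset.mul_sum]
          exact Finset.sum_congr rfl fun i _ => by simp only [hddef]; ring
        rcases hl with rfl | rfl
        · have h0 := congrFun hLc 0
          simp only [hLdef, LinearMap.coe_mk, AddHom.coe_mk, Matrix.cons_val_zero,
            Pi.zero_apply] at h0
          rw [hconv, h0, mul_zero]
        · have h0 := congrFun hLc 1
          simp only [hLdef, LinearMap.coe_mk, AddHom.coe_mk, Matrix.cons_val_one,
            Matrix.head_cons, Matrix.cons_val_zero, Pi.zero_apply] at h0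
          rw [hconv, h0, mul_zero]
      -- the perturbation element of L²
      set Ind : Fin 3 → Lp ℝ 2 ν := fun i =>
        indicatorConstLp 2 (hBm i) (measure_ne_top ν (B i)) (1:ℝ) with hInddef
      set g : Lp ℝ 2 ν := d 0 • Ind 0 + d 1 • Ind 1 + d 2 • Ind 2 with hgdef
      set gfun : C → ℝ := fun x =>
        d 0 * (B 0).indicator (fun _ => (1:ℝ)) x + d 1 * (B 1).indicator (fun _ => (1:ℝ)) x
          + d 2 * (B 2).indicator (fun _ => (1:ℝ)) x with hgfundef
      have hgfn : ⇑g =ᵐ[ν] gfun := by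
        filter_upwards [MeasureTheory.Lp.coeFn_add (d 0 • Ind 0 + d 1 • Ind 1) (d 2 • Ind 2),
          MeasureTheory.Lp.coeFn_add (d 0 • Ind 0) (d 1 • Ind 1),
          MeasureTheory.Lp.coeFn_smul (d 0) (Ind 0),
          MeasureTheory.Lp.coeFn_smul (d 1) (Ind 1),
          MeasureTheory.Lp.coeFn_smul (d 2) (Ind 2),
          indicatorConstLp_coeFn (p := 2) (hs := hBm 0) (hμs := measure_ne_top ν (B 0)) (c := (1:ℝ)),
          indicatorConstLp_coeFn (p := 2) (hs := hBm 1) (hμs := measure_ne_top ν (B 1)) (c := (1:ℝ)),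
          indicatorConstLp_coeFn (p := 2) (hs := hBm 2) (hμs := measure_ne_top ν (B 2)) (c := (1:ℝ))]
          with x h1 h2 h3 h4 h5 h6 h7 h8
        rw [hgdef, h1]
        simp only [Pi.add_apply, h2, h3, h4, h5, Pi.smul_apply, smul_eq_mul, h6, h7, h8, hgfundef]
        simp only [hInddef, h6, h7, h8]
      have hgval : ∀ i x, x ∈ B i → gfun x = d i := by
        intro i x hx
        have hind : ∀ i', (B i').indicator (fun _ => (1:ℝ)) x = if i' = i then 1 else 0 := by
          intro i'
          rcases eq_or_ne i' i with rfl | hii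
          · rw [Set.indicator_of_mem hx, if_pos rfl]
          · rw [Set.indicator_of_notMem
              (fun hx' => (Set.disjoint_left.1 (hBdisj i' i hii)) hx' hx), if_neg hii]
        simp only [hgfundef, hind]
        fin_cases i <;> simp
      have hgkey : ∀ x, gfun x = 0 ∨ (x ∈ A ∧ |gfun x| ≤ ε') := by
        intro x
        by_cases h0 : x ∈ B 0
        · exact Or.inr ⟨hBsub 0 h0, by rw [hgval 0 x h0]; exact hdbound 0⟩
        by_cases h1 : x ∈ B 1
        · exact Or.inr ⟨hBsub 1 h1, by rw [hgval 1 x h1]; exact hdbound 1⟩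
        by_cases h2 : x ∈ B 2
        · exact Or.inr ⟨hBsub 2 h2, by rw [hgval 2 x h2]; exact hdbound 2⟩
        left
        simp only [hgfundef]
        rw [Set.indicator_of_notMem h0, Set.indicator_of_notMem h1,
          Set.indicator_of_notMem h2]
        ring
      have hAfact : ∀ x ∈ A, 1/((n:ℝ)+1) ≤ f jj x ∧ ε' ≤ f k x := by
        rintro x ⟨hxSn, hxk⟩
        exact ⟨hxSn.1.1, hxk⟩
      -- the four a.e. positivity facts
      have haejjadd : 0 ≤ᵐ[ν] ⇑(Fn (ψ jj) + g) := by
        filter_upwards [MeasureTheory.Lp.coeFn_add (Fn (ψ jj)) g, hgfn, hK0 ψ hψKD jj]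
          with x h1 h2 h3
        rw [h1, Pi.add_apply, h2]
        simp only [Pi.zero_apply]
        rcases hgkey x with h | ⟨hxA, habs⟩
        · rw [h, add_zero]; exact h3
        · have hlow : 1/((n:ℝ)+1) ≤ ⇑(Fn (ψ jj)) x := (hAfact x hxA).1
          have h5 := abs_le.1 habs
          have h6 := hε'le
          linarith
      have haejjsub : 0 ≤ᵐ[ν] ⇑(Fn (ψ jj) - g) := by
        filter_upwards [MeasureTheory.Lp.coeFn_sub (Fn (ψ jj)) g, hgfn, hK0 ψ hψKD jj]
          with x h1 h2 h3
        rw [h1, Pi.sub_apply, h2]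
        simp only [Pi.zero_apply]
        rcases hgkey x with h | ⟨hxA, habs⟩
        · rw [h, sub_zero]; exact h3
        · have hlow : 1/((n:ℝ)+1) ≤ ⇑(Fn (ψ jj)) x := (hAfact x hxA).1
          have h5 := abs_le.1 habs
          have h6 := hε'le
          linarith
      have haekadd : 0 ≤ᵐ[ν] ⇑(Fn (ψ k) + g) := by
        filter_upwards [MeasureTheory.Lp.coeFn_add (Fn (ψ k)) g, hgfn, hK0 ψ hψKD k]
          with x h1 h2 h3
        rw [h1, Pi.add_apply, h2]
        simp only [Pi.zero_apply]
        rcases hgkey x with h | ⟨hxA, habs⟩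
        · rw [h, add_zero]; exact h3
        · have hlow : ε' ≤ ⇑(Fn (ψ k)) x := (hAfact x hxA).2
          have h5 := abs_le.1 habs
          linarith
      have haeksub : 0 ≤ᵐ[ν] ⇑(Fn (ψ k) - g) := by
        filter_upwards [MeasureTheory.Lp.coeFn_sub (Fn (ψ k)) g, hgfn, hK0 ψ hψKD k]
          with x h1 h2 h3
        rw [h1, Pi.sub_apply, h2]
        simp only [Pi.zero_apply]
        rcases hgkey x with h | ⟨hxA, habs⟩
        · rw [h, sub_zero]; exact h3
        · have hlow : ε' ≤ ⇑(Fn (ψ k)) x := (hAfact x hxA).2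
          have h5 := abs_le.1 habs
          linarith
      -- inner products of g with the densities vanish
      have hgG : ∀ (l : Fin m), l = jj ∨ l = k → (inner ℝ g (G l) : ℝ) = 0 := by
        intro l hl
        have hexp : (inner ℝ g (G l) : ℝ)
            = d 0 * (μ l (B 0)).toReal + d 1 * (μ l (B 1)).toReal
              + d 2 * (μ l (B 2)).toReal := by
          simp only [hgdef, hInddef]
          rw [inner_add_left, inner_add_left, real_inner_smul_left, real_inner_smul_left,
            real_inner_smul_left, hbridge l (B 0) (hBm 0), hbridge l (B 1) (hBm 1),
            hbridge l (B 2) (hBm 2)]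
        rw [hexp]
        have h0 := hdrel l hl
        rw [Fin.sum_univ_three] at h0
        exact h0
      -- the perturbation in the weak dual
      set γ : WeakDual ℝ (Lp ℝ 2 ν) :=
        StrongDual.toWeakDual (InnerProductSpace.toDual ℝ (Lp ℝ 2 ν) g) with hγdef
      have hγapp : ∀ h : Lp ℝ 2 ν, γ h = (inner ℝ g h : ℝ) :=
        fun h => InnerProductSpace.toDual_apply_apply
      have hsing : ∀ (a l : Fin m) (h : Lp ℝ 2 ν),
          ((Pi.single a γ : Fin m → WeakDual ℝ (Lp ℝ 2 ν)) l) h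
            = (Pi.single a (γ h) : Fin m → ℝ) l := by
        intro a l h
        rcases eq_or_ne l a with rfl | hla
        · rw [Pi.single_eq_same, Pi.single_eq_same]
        · rw [Pi.single_eq_of_ne hla, Pi.single_eq_of_ne hla]
          rfl
      -- generic membership of perturbed points in the fiber F
      have hmem : ∀ (a b : Fin m), a ≠ b → (a = jj ∨ a = k) → (b = jj ∨ b = k) →
          0 ≤ᵐ[ν] ⇑(Fn (ψ a) + g) → 0 ≤ᵐ[ν] ⇑(Fn (ψ b) - g) →
          (ψ + (Pi.single a γ - Pi.single b γ)) ∈ F := by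
        intro a b hab ha hb hpa hpb
        set χ' : Fin m → WeakDual ℝ (Lp ℝ 2 ν) := Pi.single a γ - Pi.single b γ with hχ'def
        have hca : χ' a = γ := by
          rw [hχ'def, Pi.sub_apply, Pi.single_eq_same, Pi.single_eq_of_ne hab, sub_zero]
        have hcb : χ' b = -γ := by
          rw [hχ'def, Pi.sub_apply, Pi.single_eq_of_ne hab.symm, Pi.single_eq_same, zero_sub]
        have hco : ∀ l, l ≠ a → l ≠ b → χ' l = 0 := by
          intro l h1 h2
          rw [hχ'def, Pi.sub_apply, Pi.single_eq_of_ne h1, Pi.single_eq_of_ne h2, sub_zero]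
        have hχ'sum : ∀ h : Lp ℝ 2 ν, (∑ l, χ' l h) = 0 := by
          intro h
          have heach : ∀ l, χ' l h = (Pi.single a (γ h) : Fin m → ℝ) l - (Pi.single b (γ h) : Fin m → ℝ) l := by
            intro l
            have h1 : χ' l h = ((Pi.single a γ : Fin m → WeakDual ℝ (Lp ℝ 2 ν)) l) h
              - ((Pi.single b γ : Fin m → WeakDual ℝ (Lp ℝ 2 ν)) l) h := rfl
            rw [h1, hsing a l h, hsing b l h]
          simp_rw [heach]
          rw [Finset.sum_sub_distrib, Finset.sum_pi_single', Finset.sum_pi_single',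
            if_pos (Finset.mem_univ a), if_pos (Finset.mem_univ b), sub_self]
        refine ⟨⟨?_, ?_⟩, ?_⟩
        · -- positivity constraints
          intro l h hh
          have hδ : (ψ + χ') l h = ψ l h + χ' l h := rfl
          rw [hδ]
          rcases eq_or_ne l a with rfl | hla
          · rw [hca]
            have hrepr : ψ l h + γ h = (inner ℝ (Fn (ψ l) + g) h : ℝ) := by
              rw [inner_add_left, hFn, hγapp]
            rw [hrepr]
            exact DWW.inner_nonneg_of_ae _ _ hpa hh
          rcases eq_or_ne l b with rfl | hlb
          · rw [hcb]
            have hδ2 : ψ l h + (-γ) h = ψ l h - γ h := rfl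
            rw [hδ2]
            have hrepr : ψ l h - γ h = (inner ℝ (Fn (ψ l) - g) h : ℝ) := by
              rw [inner_sub_left, hFn, hγapp]
            rw [hrepr]
            exact DWW.inner_nonneg_of_ae _ _ hpb hh
          · rw [hco l hla hlb]
            have hδ2 : ψ l h + (0 : WeakDual ℝ (Lp ℝ 2 ν)) h = ψ l h := by
              rw [add_eq_left]
              rfl
            rw [hδ2]
            exact hψKD.1 l h hh
        · -- sum constraint
          intro h
          have hδ : ∀ l, (ψ + χ') l h = ψ l h + χ' l h := fun l => rfl
          simp_rw [hδ]
          rw [Finset.sum_add_distrib, hψKD.2 h, hχ'sum h, add_zero]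
        · -- the value of Φ is unchanged
          refine Set.mem_preimage.2 ?_
          rw [Set.mem_singleton_iff, ← hψΦ]
          funext l
          have h1 : Φ (ψ + χ') l = ψ l (G l) + χ' l (G l) := rfl
          have h2 : Φ ψ l = ψ l (G l) := rfl
          rw [h1, h2]
          rcases eq_or_ne l a with rfl | hla
          · rw [hca, hγapp, hgG l ha, add_zero]
          rcases eq_or_ne l b with rfl | hlb
          · rw [hcb]
            have hδ2 : (-γ) (G l) = -(γ (G l)) := rfl
            rw [hδ2, hγapp, hgG l hb, neg_zero, add_zero]
          · rw [hco l hla hlb]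
            have hδ2 : (0 : WeakDual ℝ (Lp ℝ 2 ν)) (G l) = 0 := rfl
            rw [hδ2, add_zero]
      -- apply extremality
      set χ : Fin m → WeakDual ℝ (Lp ℝ 2 ν) := Pi.single jj γ - Pi.single k γ with hχdef
      have hplus : (ψ + χ) ∈ F :=
        hmem jj k (Ne.symm hkne) (Or.inl rfl) (Or.inr rfl) haejjadd haeksub
      have hminus : (ψ - χ) ∈ F := by
        have h1 := hmem k jj hkne (Or.inr rfl) (Or.inl rfl) haekadd haejjsub
        have h2 : ψ - χ = ψ + (Pi.single k γ - Pi.single jj γ) := by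
          rw [hχdef]
          abel
        rwa [h2]
      have hseg : ψ ∈ openSegment ℝ (ψ + χ) (ψ - χ) := by
        refine ⟨1/2, 1/2, by norm_num, by norm_num, by norm_num, ?_⟩
        module
      obtain ⟨heq, -⟩ := hψext (ψ + χ) hplus (ψ - χ) hminus hseg
      have hχ0 : χ = 0 := by
        have h1 := congrArg (fun z => z - ψ) heq
        simpa using h1
      have hγ0 : γ = 0 := by
        have h1 := congrFun hχ0 jj
        have h2 : χ jj = γ := by
          rw [hχdef, Pi.sub_apply, Pi.single_eq_same, Pi.single_eq_of_ne (Ne.symm hkne),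
            sub_zero]
        rw [h2] at h1
        exact h1
      have hg0 : g = 0 := by
        have h1 : InnerProductSpace.toDual ℝ (Lp ℝ 2 ν) g = 0 :=
          StrongDual.toWeakDual.injective (by rw [← hγdef, hγ0, map_zero])
        have h2 := congrArg (fun T => (InnerProductSpace.toDual ℝ (Lp ℝ 2 ν)).symm T) h1
        simpa using h2
      have hgfun0 : ∀ᵐ x ∂ν, gfun x = 0 := by
        have h2 : ⇑g =ᵐ[ν] 0 := by
          rw [hg0]
          exact MeasureTheory.Lp.coeFn_zero _ _ _
        filter_upwards [hgfn, h2] with x h3 h4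
        rw [← h3, h4]
        rfl
      have hB0 : ν (B i0) = 0 := by
        refine measure_mono_null (fun x hx => ?_) (ae_iff.1 hgfun0)
        show x ∈ {x | ¬ gfun x = 0}
        rw [Set.mem_setOf_eq, hgval i0 x hx]
        exact hdi0
      exact absurd hB0 (hBpos i0).ne'


    -- construct an exact partition from the pure fuzzy partition
    have hfmeas : ∀ j, Measurable (⇑(Fn (ψ j))) :=
      fun j => (MeasureTheory.Lp.stronglyMeasurable (Fn (ψ j))).measurable
    set T : Fin m → Set C := fun j => ⇑(Fn (ψ j)) ⁻¹' {1} with hTdef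
    have hTmeas : ∀ j, MeasurableSet (T j) := fun j => (hfmeas j) (measurableSet_singleton 1)
    have hTmem : ∀ j x, x ∈ T j ↔ ⇑(Fn (ψ j)) x = 1 := fun j x => Iff.rfl
    set W : Set C := {x | (∑ i, ⇑(Fn (ψ i)) x) = 1 ∧
      ∀ i, (⇑(Fn (ψ i)) x = 0 ∨ ⇑(Fn (ψ i)) x = 1)} with hWdef
    have hWae : ∀ᵐ x ∂ν, x ∈ W := by
      filter_upwards [hKsum_ae ψ hψKD, MeasureTheory.ae_all_iff.2 hpure] with x h1 h2
      exact ⟨h1, h2⟩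
    -- the value of Φ ψ in terms of T
    have hΦψ : ∀ j, Φ ψ j = (μ j (T j)).toReal := by
      intro j
      have h1 : Φ ψ j = (inner ℝ (Fn (ψ j)) (G j) : ℝ) := (hFn _ _).symm
      have h2 : (inner ℝ (Fn (ψ j)) (G j) : ℝ)
          = (inner ℝ (indicatorConstLp 2 (hTmeas j) (measure_ne_top ν (T j)) (1:ℝ)) (G j) : ℝ) := by
        rw [MeasureTheory.L2.inner_def, MeasureTheory.L2.inner_def]
        apply integral_congr_ae
        filter_upwards [indicatorConstLp_coeFn (p := 2) (hs := hTmeas j)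
          (hμs := measure_ne_top ν (T j)) (c := (1:ℝ)), hpure j] with x hx hp
        rw [hx]
        rcases hp with hp | hp
        · rw [Set.indicator_of_notMem (by rw [hTmem j x, hp]; norm_num), hp]
        · rw [Set.indicator_of_mem (by rwa [hTmem j x]), hp]
      rw [h1, h2, hbridge j (T j) (hTmeas j)]
    -- the partition sets
    set j0 : Fin m := ⟨0, hm⟩ with hj0def
    set mn : Fin m → Set C := fun j => T j \ ⋃ (i : Fin m), ⋃ (_ : i < j), T i with hmndef
    have hmnmeas : ∀ j, MeasurableSet (mn j) :=
      fun j => (hTmeas j).diff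
        (MeasurableSet.iUnion fun i => MeasurableSet.iUnion fun _ => hTmeas i)
    have hmnT : ∀ j, mn j ⊆ T j := fun _ => Set.diff_subset
    have hmn_disj : ∀ i j, i ≠ j → Disjoint (mn i) (mn j) := by
      intro i j hij
      rcases lt_or_gt_of_ne hij with h | h
      · rw [Set.disjoint_left]
        intro x hxi hxj
        exact hxj.2 (Set.mem_iUnion.2 ⟨i, Set.mem_iUnion.2 ⟨h, hxi.1⟩⟩)
      · rw [Set.disjoint_right]
        intro x hxj hxi
        exact hxi.2 (Set.mem_iUnion.2 ⟨j, Set.mem_iUnion.2 ⟨h, hxj.1⟩⟩)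
    set rest : Set C := (⋃ i, T i)ᶜ with hrestdef
    have hrest_disj : ∀ j, Disjoint rest (T j) := by
      intro j
      rw [Set.disjoint_left]
      intro x hx hxj
      exact hx (Set.mem_iUnion.2 ⟨j, hxj⟩)
    set AA : Fin m → Set C := fun j => if j = j0 then mn j ∪ rest else mn j with hAAdef
    have hAAmeas : ∀ j, MeasurableSet (AA j) := by
      intro j
      simp only [hAAdef]
      split
      · exact (hmnmeas j).union (MeasurableSet.iUnion fun i => hTmeas i).compl
      · exact hmnmeas j
    have hAAsub : ∀ j, AA j ⊆ mn j ∪ rest := by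
      intro j
      simp only [hAAdef]
      split
      · exact le_rfl
      · exact Set.subset_union_left
    have hAAdisj : ∀ i j, i ≠ j → Disjoint (AA i) (AA j) := by
      intro i j hij
      simp only [hAAdef]
      by_cases hi : i = j0 <;> by_cases hj : j = j0
      · exact absurd (hi.trans hj.symm) hij
      · rw [if_pos hi, if_neg hj]
        exact Set.disjoint_union_left.2
          ⟨hmn_disj i j hij, (hrest_disj j).mono_right (hmnT j)⟩
      · rw [if_neg hi, if_pos hj]
        exact Set.disjoint_union_right.2
          ⟨hmn_disj i j hij, ((hrest_disj i).mono_right (hmnT i)).symm⟩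
      · rw [if_neg hi, if_neg hj]
        exact hmn_disj i j hij
    have hAAunion : (⋃ i, AA i) = Set.univ := by
      apply Set.eq_univ_of_forall
      intro x
      rw [Set.mem_iUnion]
      by_cases hx : ∃ i, x ∈ T i
      · classical
        set s : Finset (Fin m) := Finset.univ.filter (fun i => x ∈ T i) with hsdef
        have hsne : s.Nonempty := by
          obtain ⟨i, hi⟩ := hx
          exact ⟨i, by simp [hsdef, hi]⟩
        have hl0T : x ∈ T (s.min' hsne) := by
          have := s.min'_mem hsne
          simp only [hsdef, Finset.mem_filter] at this
          exact this.2
        have hxmn : x ∈ mn (s.min' hsne) := by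
          refine ⟨hl0T, fun hmem => ?_⟩
          rw [Set.mem_iUnion] at hmem
          obtain ⟨i, hi⟩ := hmem
          rw [Set.mem_iUnion] at hi
          obtain ⟨hil, hxi⟩ := hi
          exact absurd (s.min'_le i (by simp [hsdef, hxi])) (not_le.2 hil)
        refine ⟨s.min' hsne, ?_⟩
        simp only [hAAdef]
        split
        · exact Set.mem_union_left _ hxmn
        · exact hxmn
      · push_neg at hx
        refine ⟨j0, ?_⟩
        simp only [hAAdef, if_pos rfl]
        refine Set.mem_union_right _ ?_
        rw [hrestdef]
        intro hmem
        rw [Set.mem_iUnion] at hmem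
        obtain ⟨i, hi⟩ := hmem
        exact hx i hi
    have hAAμ : ∀ j, μ j (AA j) = μ j (T j) := by
      intro j
      apply measure_congr
      rw [Filter.eventuallyEq_set]
      apply Filter.Eventually.filter_mono (hac j).ae_le
      filter_upwards [hWae] with x hxW
      have hnn : ∀ i, (0:ℝ) ≤ ⇑(Fn (ψ i)) x := by
        intro i
        rcases hxW.2 i with h | h <;> rw [h] <;> norm_num
      constructor
      · intro hxA
        rcases hAAsub j hxA with hxm | hxr
        · exact hxm.1
        · exfalso
          have hz : ∀ i, ⇑(Fn (ψ i)) x = 0 := by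
            intro i
            rcases hxW.2 i with h | h
            · exact h
            · exact absurd (Set.mem_iUnion.2 ⟨i, (hTmem i x).2 h⟩) hxr
          have h0 : (∑ i, ⇑(Fn (ψ i)) x) = 0 := Finset.sum_eq_zero fun i _ => hz i
          rw [hxW.1] at h0
          norm_num at h0
      · intro hxT
        have hxmn : x ∈ mn j := by
          refine ⟨hxT, fun hmem => ?_⟩
          rw [Set.mem_iUnion] at hmem
          obtain ⟨i, hi⟩ := hmem
          rw [Set.mem_iUnion] at hi
          obtain ⟨hij, hxi⟩ := hi
          have hne : i ≠ j := ne_of_lt hij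
          have h2 : (2:ℝ) ≤ ∑ l, ⇑(Fn (ψ l)) x := by
            calc (2:ℝ) = ⇑(Fn (ψ i)) x + ⇑(Fn (ψ j)) x := by
                  rw [(hTmem i x).1 hxi, (hTmem j x).1 hxT]; norm_num
              _ ≤ ⇑(Fn (ψ i)) x + ∑ l ∈ Finset.univ.erase i, ⇑(Fn (ψ l)) x :=
                  add_le_add_right (Finset.single_le_sum (fun l _ => hnn l)
                    (Finset.mem_erase.2 ⟨hne.symm, Finset.mem_univ j⟩)) _
              _ = ∑ l, ⇑(Fn (ψ l)) x := Finset.add_sum_erase _ (fun l => ⇑(Fn (ψ l)) x) (Finset.mem_univ i)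
          rw [hxW.1] at h2
          norm_num at h2
        simp only [hAAdef]
        split
        · exact Set.mem_union_left _ hxmn
        · exact hxmn
    refine ⟨AA, hAAmeas, hAAdisj, hAAunion, ?_⟩
    rw [← hψΦ]
    funext j
    rw [hΦψ j, hAAμ j]

  have hPeq : Pset = Φ '' KD := Set.Subset.antisymm hPsub hsub2
  rw [hPeq]
  constructor
  · intro p hp q hq a b ha hb hab
    obtain ⟨φ, hφ, rfl⟩ := hp
    obtain ⟨ψ, hψ, rfl⟩ := hq
    refine ⟨a • φ + b • ψ, hKDconvex hφ hψ ha hb hab, ?_⟩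
    funext j
    rfl
  · exact hKDcompact.image hΦcont
end
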